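/- arXiv:1412.2226 — 5 statements merged into one kernel-verified Lean document; each statement's English description precedes it below -/
import Mathlib

section
/- Let M be a balanced allocation. M is the outcome of every recursively balanced policy if and only if for every round index t with 1 ≤ t ≤ k and every agent a_j, the item p_j^t is agent a_j's most preferred item among the items of I not contained in { p_{j'}^i : 1 ≤ j' ≤ n, 1 ≤ i < t } (the items M allocates in earlier rounds). -/
open Finset
open scoped Classical

/-- The most preferred item of a nonempty finset w.r.t. a linear order
(greater means more preferred). -/
noncomputable def favorite {ι : Type} (L : LinearOrder ι) (S : Finset ι) (h : S.Nonempty) : ι :=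
  @Finset.max' ι L S h

/-- Sequential allocation: process the turns in order; at each turn the agent whose
turn it is picks her most preferred item among the items not yet allocated.
Returns the list of (agent, item) picks, in order. -/
noncomputable def seqAlloc {n : ℕ} {ι : Type} [DecidableEq ι]
    (P : Fin n → LinearOrder ι) : List (Fin n) → Finset ι → List (Fin n × ι)
  | [], _ => []
  | a :: rest, S =>
    if h : S.Nonempty then
      (a, favorite (P a) S h) :: seqAlloc P rest (S.erase (favorite (P a) S h))
    else []

/-- `M` is the outcome of the policy `π`: every item is picked by the agent that
`M` assigns it to. -/
def IsOutcome {n : ℕ} {ι : Type} [Fintype ι] [DecidableEq ι]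
    (P : Fin n → LinearOrder ι) (π : List (Fin n)) (M : ι → Fin n) : Prop :=
  ∀ o : ι, (M o, o) ∈ seqAlloc P π Finset.univ

/-- The set of items that agent `a` picks under the policy `π`. -/
noncomputable def receives {n : ℕ} {ι : Type} [Fintype ι] [DecidableEq ι]
    (P : Fin n → LinearOrder ι) (π : List (Fin n)) (a : Fin n) : Finset ι :=
  Finset.univ.filter (fun o => (a, o) ∈ seqAlloc P π Finset.univ)

/-- An allocation `M` is Pareto optimal if there is no bijection `f` of the items such
that every agent weakly prefers `f o` to `o` for each item `o` she gets, with at least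
one strict preference. -/
def ParetoOptimal {n : ℕ} {ι : Type} (P : Fin n → LinearOrder ι) (M : ι → Fin n) : Prop :=
  ¬ ∃ f : ι ≃ ι, (∀ o : ι, (P (M o)).le o (f o)) ∧ (∃ o : ι, (P (M o)).lt o (f o))

/-- A policy is balanced if every agent has exactly `k` turns. -/
def BalancedPolicy {n : ℕ} (k : ℕ) (π : List (Fin n)) : Prop :=
  ∀ a : Fin n, π.count a = k

/-- An allocation is balanced if every agent receives exactly `k` items. -/
def BalancedAlloc {n : ℕ} {ι : Type} [Fintype ι] (k : ℕ) (M : ι → Fin n) : Prop :=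
  ∀ a : Fin n, (Finset.univ.filter (fun o => M o = a)).card = k

/-- A policy is recursively balanced if it splits into `k` consecutive rounds of `n`
turns each, every agent having exactly one turn in each round. -/
def RecBalanced (n k : ℕ) (π : List (Fin n)) : Prop :=
  ∃ rounds : List (List (Fin n)), rounds.length = k ∧
    (∀ r ∈ rounds, r.length = n ∧ ∀ a : Fin n, r.count a = 1) ∧
    π = rounds.flatten

/-- A strict alternation policy: every one of the `k` rounds uses the same order `σ`
over the agents. -/
def StrictAlt (n k : ℕ) (π : List (Fin n)) : Prop :=
  ∃ σ : List (Fin n), σ.length = n ∧ (∀ a : Fin n, σ.count a = 1) ∧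
    π = (List.replicate k σ).flatten

/-- A balanced alternation policy: odd-numbered rounds use the order `σ` over the agents
and even-numbered rounds use its reverse. -/
def BalAlt (n k : ℕ) (π : List (Fin n)) : Prop :=
  ∃ σ : List (Fin n), σ.length = n ∧ (∀ a : Fin n, σ.count a = 1) ∧
    π = ((List.range k).map (fun r => if r % 2 = 0 then σ else σ.reverse)).flatten

/-- `p j i` (for `1 ≤ i ≤ k`) is the item ranked `i`-th by agent `j` among the items `M`
allocates to `j`: it is allocated to `j`, and exactly `i - 1` of the items allocated
to `j` are strictly preferred to it by agent `j`. -/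
def IsRankingOf {n : ℕ} {ι : Type} [Fintype ι] (P : Fin n → LinearOrder ι) (k : ℕ)
    (M : ι → Fin n) (p : Fin n → ℕ → ι) : Prop :=
  ∀ (j : Fin n) (i : ℕ), 1 ≤ i → i ≤ k →
    M (p j i) = j ∧
    (Finset.univ.filter (fun o => M o = j ∧ (P j).lt (p j i) o)).card = i - 1

/-- Condition 3: for all `1 ≤ t < s ≤ k` and all agents `j, j'`, agent `j` strictly
prefers `p j t` to `p j' s`. -/
def Cond3 {n : ℕ} {ι : Type} (P : Fin n → LinearOrder ι) (k : ℕ) (p : Fin n → ℕ → ι) : Prop :=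
  ∀ t s : ℕ, 1 ≤ t → t < s → s ≤ k → ∀ j j' : Fin n, (P j).lt (p j' s) (p j t)

/-- The edge relation of the directed graph `G_M`: for odd `i ≤ k` an edge `a → b`
whenever `b` strictly prefers `p a i` to `p b i`, and for even `i ≤ k` an edge `a → b`
whenever `a` strictly prefers `p b i` to `p a i`. -/
def GM {n : ℕ} {ι : Type} (P : Fin n → LinearOrder ι) (k : ℕ) (p : Fin n → ℕ → ι)
    (a b : Fin n) : Prop :=
  (∃ i : ℕ, 1 ≤ i ∧ i ≤ k ∧ i % 2 = 1 ∧ (P b).lt (p b i) (p a i)) ∨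
  (∃ i : ℕ, 1 ≤ i ∧ i ≤ k ∧ i % 2 = 0 ∧ (P a).lt (p a i) (p b i))

/-- The edge relation of the directed graph `H_M`: for each `i ≤ k` an edge `a → b`
whenever `b` strictly prefers `p a i` to `p b i`. -/
def HM {n : ℕ} {ι : Type} (P : Fin n → LinearOrder ι) (k : ℕ) (p : Fin n → ℕ → ι)
    (a b : Fin n) : Prop :=
  ∃ i : ℕ, 1 ≤ i ∧ i ≤ k ∧ (P b).lt (p b i) (p a i)

/-- The `k` most preferred items of agent `j`: those items with fewer than `k` items
strictly preferred to them by `j`. -/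
noncomputable def topItems {n : ℕ} {ι : Type} [Fintype ι] (P : Fin n → LinearOrder ι)
    (k : ℕ) (j : Fin n) : Finset ι :=
  Finset.univ.filter (fun o => (Finset.univ.filter (fun o' => (P j).lt o o')).card < k)

/-- The rank of item `o` in agent `j`'s preference (the most preferred item has rank 1). -/
noncomputable def rankOf {n : ℕ} {ι : Type} [Fintype ι] (P : Fin n → LinearOrder ι)
    (j : Fin n) (o : ι) : ℕ :=
  (Finset.univ.filter (fun o' => (P j).lt o o')).card + 1

section AuxProof
set_option linter.unusedSectionVars false

variable {ι : Type} [Fintype ι] [DecidableEq ι] {n k : ℕ}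

private lemma favorite_mem {L : LinearOrder ι} {S : Finset ι} (h : S.Nonempty) :
    favorite L S h ∈ S := @Finset.max'_mem ι L S h

private lemma le_favorite {L : LinearOrder ι} {S : Finset ι} (h : S.Nonempty) {o : ι}
    (ho : o ∈ S) : L.le o (favorite L S h) := @Finset.le_max' ι L S o ho

private lemma favorite_eq {L : LinearOrder ι} {S : Finset ι} (h : S.Nonempty) {x : ι}
    (hx : x ∈ S) (hmax : ∀ o ∈ S, L.le o x) : favorite L S h = x := by
  letI := L
  exact le_antisymm (hmax _ (favorite_mem h)) (le_favorite h hx)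

private lemma seqAlloc_nil (P : Fin n → LinearOrder ι) (S : Finset ι) :
    seqAlloc P [] S = [] := by rw [seqAlloc]

private lemma seqAlloc_cons (P : Fin n → LinearOrder ι) (a : Fin n) (rest : List (Fin n))
    (S : Finset ι) (h : S.Nonempty) :
    seqAlloc P (a :: rest) S =
      (a, favorite (P a) S h) :: seqAlloc P rest (S.erase (favorite (P a) S h)) := by
  rw [seqAlloc, dif_pos h]

private lemma seqAlloc_snd_mem (P : Fin n → LinearOrder ι) :
    ∀ (l : List (Fin n)) (S : Finset ι) (x : Fin n × ι), x ∈ seqAlloc P l S → x.2 ∈ S := by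
  intro l
  induction l with
  | nil => intro S x hx; rw [seqAlloc_nil] at hx; simp at hx
  | cons a rest ih =>
    intro S x hx
    by_cases h : S.Nonempty
    · rw [seqAlloc_cons P a rest S h] at hx
      rcases List.mem_cons.1 hx with h1 | h1
      · rw [h1]; exact favorite_mem h
      · exact Finset.mem_of_mem_erase (ih _ _ h1)
    · rw [seqAlloc, dif_neg h] at hx; simp at hx

private lemma seqAlloc_fst_unique (P : Fin n → LinearOrder ι) :
    ∀ (l : List (Fin n)) (S : Finset ι) (a b : Fin n) (o : ι),
      (a, o) ∈ seqAlloc P l S → (b, o) ∈ seqAlloc P l S → a = b := by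
  intro l
  induction l with
  | nil => intro S a b o ha; rw [seqAlloc_nil] at ha; simp at ha
  | cons c rest ih =>
    intro S a b o ha hb
    by_cases h : S.Nonempty
    · rw [seqAlloc_cons P c rest S h] at ha hb
      simp only [List.mem_cons, Prod.mk.injEq] at ha hb
      rcases ha with ⟨ha1, ha2⟩ | ha' <;> rcases hb with ⟨hb1, hb2⟩ | hb'
      · rw [ha1, hb1]
      · exfalso
        have hmem := seqAlloc_snd_mem P rest _ (b, o) hb'
        exact (Finset.mem_erase.1 hmem).1 ha2
      · exfalso
        have hmem := seqAlloc_snd_mem P rest _ (a, o) ha'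
        exact (Finset.mem_erase.1 hmem).1 hb2
      · exact ih _ _ _ _ ha' hb'
    · rw [seqAlloc, dif_neg h] at ha; simp at ha

/-- The set of items allocated in rounds before `t`. -/
private noncomputable def Eset (p : Fin n → ℕ → ι) (t : ℕ) : Finset ι :=
  Finset.image (fun x : Fin n × ℕ => p x.1 x.2) (Finset.univ ×ˢ Finset.Ico 1 t)

private lemma mem_Eset {p : Fin n → ℕ → ι} {t : ℕ} {o : ι} :
    o ∈ Eset p t ↔ ∃ j i, 1 ≤ i ∧ i < t ∧ o = p j i := by
  constructor
  · intro h
    obtain ⟨⟨j, i⟩, hmem, he⟩ := Finset.mem_image.1 h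
    obtain ⟨-, hi⟩ := Finset.mem_product.1 hmem
    obtain ⟨h1, h2⟩ := Finset.mem_Ico.1 hi
    exact ⟨j, i, h1, h2, he.symm⟩
  · rintro ⟨j, i, h1, h2, rfl⟩
    exact Finset.mem_image.2 ⟨⟨j, i⟩, Finset.mem_product.2
      ⟨Finset.mem_univ _, Finset.mem_Ico.2 ⟨h1, h2⟩⟩, rfl⟩

section WithData

variable {P : Fin n → LinearOrder ι} {M : ι → Fin n} {p : Fin n → ℕ → ι}

private lemma cnt_lt (j : Fin n) {x y : ι} (hy : M y = j) (hxy : (P j).lt x y) :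
    (Finset.univ.filter (fun o => M o = j ∧ (P j).lt y o)).card <
      (Finset.univ.filter (fun o => M o = j ∧ (P j).lt x o)).card := by
  letI := P j
  apply Finset.card_lt_card
  constructor
  · intro o ho
    simp only [Finset.mem_filter, Finset.mem_univ, true_and] at ho ⊢
    exact ⟨ho.1, lt_trans hxy ho.2⟩
  · intro hsub
    have hy' : y ∈ Finset.univ.filter (fun o => M o = j ∧ (P j).lt x o) := by
      simp only [Finset.mem_filter, Finset.mem_univ, true_and]
      exact ⟨hy, hxy⟩
    have := hsub hy'
    simp only [Finset.mem_filter, Finset.mem_univ, true_and] at this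
    exact lt_irrefl y this.2

private lemma p_eq (hp : IsRankingOf P k M p) {j j' : Fin n} {i i' : ℕ}
    (h1 : 1 ≤ i) (h2 : i ≤ k) (h3 : 1 ≤ i') (h4 : i' ≤ k) (he : p j i = p j' i') :
    j = j' ∧ i = i' := by
  obtain ⟨hm, hc⟩ := hp j i h1 h2
  obtain ⟨hm', hc'⟩ := hp j' i' h3 h4
  have hj : j = j' := by rw [← hm, ← hm', he]
  subst hj
  refine ⟨rfl, ?_⟩
  rw [he, hc'] at hc
  omega

private lemma p_le (hp : IsRankingOf P k M p) (j : Fin n) {t s : ℕ}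
    (h1 : 1 ≤ t) (hts : t ≤ s) (hsk : s ≤ k) : (P j).le (p j s) (p j t) := by
  letI := P j
  rcases le_or_gt (p j s) (p j t) with h | h
  · exact h
  · exfalso
    have hM : M (p j s) = j := (hp j s (le_trans h1 hts) hsk).1
    have := cnt_lt j hM h
    rw [(hp j s (le_trans h1 hts) hsk).2, (hp j t h1 (le_trans hts hsk)).2] at this
    omega

private lemma p_surj (hp : IsRankingOf P k M p) (hbal : BalancedAlloc k M) {j : Fin n} {o : ι}
    (ho : M o = j) : ∃ i, 1 ≤ i ∧ i ≤ k ∧ o = p j i := by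
  classical
  set A := Finset.univ.filter (fun o => M o = j) with hA
  set T := (Finset.Icc 1 k).image (p j) with hT
  have hTA : T ⊆ A := by
    intro x hx
    obtain ⟨i, hi, rfl⟩ := Finset.mem_image.1 hx
    obtain ⟨hi1, hi2⟩ := Finset.mem_Icc.1 hi
    simp only [hA, Finset.mem_filter, Finset.mem_univ, true_and]
    exact (hp j i hi1 hi2).1
  have hcardT : T.card = k := by
    rw [hT, Finset.card_image_of_injOn, Nat.card_Icc]
    · omega
    · intro i hi i' hi' he
      obtain ⟨a1, a2⟩ := Finset.mem_Icc.1 hi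
      obtain ⟨b1, b2⟩ := Finset.mem_Icc.1 hi'
      exact (p_eq hp a1 a2 b1 b2 he).2
  have hcardA : A.card = k := hbal j
  have hEq : T = A := Finset.eq_of_subset_of_card_le hTA (by rw [hcardA, hcardT])
  have hoA : o ∈ A := by simp [hA, ho]
  rw [← hEq] at hoA
  obtain ⟨i, hi, he⟩ := Finset.mem_image.1 hoA
  obtain ⟨hi1, hi2⟩ := Finset.mem_Icc.1 hi
  exact ⟨i, hi1, hi2, he.symm⟩

private lemma p_not_mem_E (hp : IsRankingOf P k M p) {j : Fin n} {t : ℕ}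
    (h1 : 1 ≤ t) (h2 : t ≤ k) : p j t ∉ Eset p t := by
  rw [mem_Eset]
  rintro ⟨j', i, hi1, hit, he⟩
  have := (p_eq hp h1 h2 hi1 (le_trans (le_of_lt hit) h2) he).2
  omega

private lemma Eset_succ {s : ℕ} (h1 : 1 ≤ s) :
    Eset p (s + 1) = Eset p s ∪ Finset.univ.image (fun j => p j s) := by
  ext o
  rw [Finset.mem_union, mem_Eset, mem_Eset]
  constructor
  · rintro ⟨j, i, hi1, hit, rfl⟩
    rcases lt_or_ge i s with h | h
    · exact Or.inl ⟨j, i, hi1, h, rfl⟩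
    · have : i = s := by omega
      subst this
      exact Or.inr (Finset.mem_image.2 ⟨j, Finset.mem_univ _, rfl⟩)
  · rintro (⟨j, i, hi1, hit, rfl⟩ | h)
    · exact ⟨j, i, hi1, by omega, rfl⟩
    · obtain ⟨j, -, rfl⟩ := Finset.mem_image.1 h
      exact ⟨j, s, h1, by omega, rfl⟩

private lemma oneRound (P : Fin n → LinearOrder ι) (r : List (Fin n)) :
    ∀ (S : Finset ι) (rest : List (Fin n)) (q : Fin n → ι),
      r.Nodup → (∀ a b : Fin n, q a = q b → a = b) → (∀ a ∈ r, q a ∈ S) →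
      (∀ a ∈ r, ∀ o ∈ S, (P a).le o (q a)) →
      seqAlloc P (r ++ rest) S =
        (r.map fun a => (a, q a)) ++ seqAlloc P rest (S \ (r.map q).toFinset) := by
  induction r with
  | nil => intro S rest q _ _ _ _; simp
  | cons a r ih =>
    intro S rest q hnd hqinj hmem hmax
    have hS : S.Nonempty := ⟨q a, hmem a (List.mem_cons_self)⟩
    have hfav : favorite (P a) S hS = q a :=
      favorite_eq hS (hmem a (List.mem_cons_self)) (fun o ho => hmax a (List.mem_cons_self) o ho)
    have hset : S.erase (q a) \ (r.map q).toFinset = S \ ((a :: r).map q).toFinset := by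
      ext o
      simp only [Finset.mem_sdiff, Finset.mem_erase, List.map_cons, List.toFinset_cons,
        Finset.mem_insert, List.mem_toFinset]
      tauto
    rw [List.cons_append, seqAlloc_cons P a (r ++ rest) S hS, hfav]
    rw [ih (S.erase (q a)) rest q (List.Nodup.of_cons hnd) hqinj ?_ ?_]
    · rw [hset]; simp
    · intro b hb
      rw [Finset.mem_erase]
      refine ⟨?_, hmem b (List.mem_cons_of_mem a hb)⟩
      intro he
      have : b = a := hqinj b a he
      subst this
      exact (List.nodup_cons.1 hnd).1 hb
    · intro b hb o ho
      exact hmax b (List.mem_cons_of_mem a hb) o (Finset.mem_of_mem_erase ho)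

private lemma sim (hp : IsRankingOf P k M p) :
    ∀ (rs : List (List (Fin n))) (rest : List (Fin n)) (s : ℕ),
      1 ≤ s → s + rs.length ≤ k + 1 →
      (∀ r ∈ rs, ∀ a : Fin n, r.count a = 1) →
      (∀ t, s ≤ t → t < s + rs.length → ∀ j : Fin n, ∀ o : ι,
        o ∉ Eset p t → (P j).le o (p j t)) →
      ∃ pre : List (Fin n × ι),
        seqAlloc P (rs.flatten ++ rest) (Finset.univ \ Eset p s) =
          pre ++ seqAlloc P rest (Finset.univ \ Eset p (s + rs.length)) ∧
        ∀ (j : Fin n) (t : ℕ), s ≤ t → t < s + rs.length → (j, p j t) ∈ pre := by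
  intro rs
  induction rs with
  | nil =>
    intro rest s h1 h2 _ _
    refine ⟨[], by simp, ?_⟩
    intro j t ha hb
    simp only [List.length_nil] at hb
    omega
  | cons r rs ih =>
    intro rest s h1 h2 hcnt hcond
    have hsk : s ≤ k := by simp only [List.length_cons] at h2; omega
    have hrmem : ∀ a : Fin n, a ∈ r := by
      intro a
      have := hcnt r (List.mem_cons_self) a
      exact List.count_pos_iff.1 (by omega)
    have hrnd : r.Nodup := List.nodup_iff_count_le_one.2 (fun a => le_of_eq (hcnt r (List.mem_cons_self) a))
    have hqinj : ∀ a b : Fin n, p a s = p b s → a = b := by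
      intro a b he
      exact (p_eq hp h1 hsk h1 hsk he).1
    have hqmem : ∀ a ∈ r, p a s ∈ Finset.univ \ Eset p s := by
      intro a _
      rw [Finset.mem_sdiff]
      exact ⟨Finset.mem_univ _, p_not_mem_E hp h1 hsk⟩
    have hqmax : ∀ a ∈ r, ∀ o ∈ Finset.univ \ Eset p s, (P a).le o (p a s) := by
      intro a _ o ho
      exact hcond s le_rfl (by simp only [List.length_cons]; omega) a o (Finset.mem_sdiff.1 ho).2
    have hstate : (Finset.univ \ Eset p s) \ (r.map (fun a => p a s)).toFinset =
        Finset.univ \ Eset p (s + 1) := by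
      have himg : (r.map (fun a => p a s)).toFinset = Finset.univ.image (fun j => p j s) := by
        ext o
        simp only [List.mem_toFinset, List.mem_map, Finset.mem_image, Finset.mem_univ, true_and]
        constructor
        · rintro ⟨a, -, rfl⟩; exact ⟨a, rfl⟩
        · rintro ⟨a, rfl⟩; exact ⟨a, hrmem a, rfl⟩
      rw [himg, Eset_succ h1, Finset.sdiff_sdiff_left']
      ext o
      simp only [Finset.mem_inter, Finset.mem_sdiff, Finset.mem_union]
      tauto
    obtain ⟨pre', heq', hmem'⟩ := ih rest (s + 1)
      (by omega) (by simp only [List.length_cons] at h2 ⊢; omega)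
      (fun r' hr' => hcnt r' (List.mem_cons_of_mem r hr'))
      (fun t ha hb => hcond t (by omega)
        (by simp only [List.length_cons] at hb ⊢; omega))
    refine ⟨(r.map fun a => (a, p a s)) ++ pre', ?_, ?_⟩
    · rw [List.flatten_cons, List.append_assoc,
        oneRound P r (Finset.univ \ Eset p s) (rs.flatten ++ rest) (fun a => p a s)
          hrnd hqinj hqmem hqmax, hstate, heq', List.append_assoc,
        show s + 1 + rs.length = s + (r :: rs).length by
          simp only [List.length_cons]; omega]
    · intro j t ha hb
      rcases eq_or_lt_of_le ha with h | h
      · subst h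
        exact List.mem_append_left _ (List.mem_map.2 ⟨j, hrmem j, rfl⟩)
      · refine List.mem_append_right _ (hmem' j t (by omega) ?_)
        simp only [List.length_cons] at hb ⊢
        omega

end WithData
end AuxProof

/-- A balanced allocation `M` is the outcome of every recursively balanced
policy if and only if for every round `1 ≤ t ≤ k` and every agent `j`, the item `p j t`
is `j`'s most preferred item among the items not allocated by `M` in earlier rounds. -/
theorem necessary_assignment_recursively_balanced
    {ι : Type} [Fintype ι] [DecidableEq ι] {n k : ℕ} (hn : 0 < n) (hk : 1 ≤ k)
    (hcard : Fintype.card ι = k * n)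
    (P : Fin n → LinearOrder ι) (M : ι → Fin n) (hbal : BalancedAlloc k M)
    (p : Fin n → ℕ → ι) (hp : IsRankingOf P k M p) :
    (∀ π : List (Fin n), RecBalanced n k π → IsOutcome P π M) ↔
      ∀ t : ℕ, 1 ≤ t → t ≤ k → ∀ j : Fin n, ∀ o : ι,
        o ∉ Finset.image (fun x : Fin n × ℕ => p x.1 x.2)
              (Finset.univ ×ˢ Finset.Ico 1 t) →
        (P j).le o (p j t) := by
  have hE1 : (Finset.univ : Finset ι) \ Eset p 1 = Finset.univ := by
    have : Eset p 1 = ∅ := by simp [Eset]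
    rw [this, Finset.sdiff_empty]
  constructor
  · intro hLHS t
    induction t using Nat.strong_induction_on with
    | _ t IH =>
      intro ht1 htk j o ho
      have hσcnt : ∀ a : Fin n, (List.finRange n).count a = 1 := fun a =>
        List.nodup_iff_count_eq_one.1 (List.nodup_finRange n) a (List.mem_finRange a)
      have hσlen : (List.finRange n).length = n := List.length_finRange
      set σ := List.finRange n with hσ
      have hIH : ∀ t', 1 ≤ t' → t' < t → ∀ j' : Fin n, ∀ o' : ι,
          o' ∉ Eset p t' → (P j').le o' (p j' t') := by
        intro t' h1 h2 j' o' ho'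
        exact IH t' h2 h1 (by omega) j' o' ho'
      have hrb : RecBalanced n k
          ((List.replicate (t-1) σ ++ (j :: σ.erase j) :: List.replicate (k-t) σ).flatten) := by
        refine ⟨_, ?_, ?_, rfl⟩
        · simp only [List.length_append, List.length_replicate, List.length_cons]
          omega
        · intro r hr
          rw [List.mem_append, List.mem_cons] at hr
          rcases hr with hr | hr | hr
          · rw [List.eq_of_mem_replicate hr]
            exact ⟨hσlen, hσcnt⟩
          · subst hr
            constructor
            · rw [List.length_cons, List.length_erase_of_mem (List.mem_finRange j), hσlen]
              omega
            · intro a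
              by_cases ha : a = j
              · subst ha
                rw [List.count_cons_self, List.count_erase_self, hσcnt]
              · rw [List.count_cons_of_ne (Ne.symm ha), List.count_erase_of_ne ha, hσcnt]
          · rw [List.eq_of_mem_replicate hr]
            exact ⟨hσlen, hσcnt⟩
      have hπflat : (List.replicate (t-1) σ ++ (j :: σ.erase j) :: List.replicate (k-t) σ).flatten
          = (List.replicate (t-1) σ).flatten
            ++ ((j :: σ.erase j) ++ (List.replicate (k-t) σ).flatten) := by
        rw [List.flatten_append, List.flatten_cons]
      have hout : ∀ o' : ι, (M o', o') ∈ seqAlloc P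
          ((List.replicate (t-1) σ).flatten
            ++ ((j :: σ.erase j) ++ (List.replicate (k-t) σ).flatten)) Finset.univ := by
        intro o'
        rw [← hπflat]
        exact hLHS _ hrb o'
      obtain ⟨pre, heq, -⟩ := sim hp (List.replicate (t-1) σ)
        ((j :: σ.erase j) ++ (List.replicate (k-t) σ).flatten) 1 le_rfl
        (by simp only [List.length_replicate]; omega)
        (fun r hr a => by rw [List.eq_of_mem_replicate hr]; exact hσcnt a)
        (fun t' ha hb j' o' ho' =>
          hIH t' ha (by simp only [List.length_replicate] at hb; omega) j' o' ho')
      have hlen1 : 1 + (List.replicate (t - 1) σ).length = t := by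
        simp only [List.length_replicate]; omega
      rw [hlen1, hE1] at heq
      have hS : (Finset.univ \ Eset p t).Nonempty :=
        ⟨p j t, Finset.mem_sdiff.2 ⟨Finset.mem_univ _, p_not_mem_E hp ht1 htk⟩⟩
      rw [List.cons_append, seqAlloc_cons P j _ _ hS] at heq
      set f := favorite (P j) (Finset.univ \ Eset p t) hS with hfdef
      have hmemf : (j, f) ∈ seqAlloc P
          ((List.replicate (t-1) σ).flatten
            ++ ((j :: σ.erase j) ++ (List.replicate (k-t) σ).flatten)) Finset.univ := by
        rw [List.cons_append, heq]
        exact List.mem_append_right _ List.mem_cons_self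
      have hMf : M f = j := seqAlloc_fst_unique P _ _ _ _ _ (hout f) hmemf
      obtain ⟨i, hi1, hi2, hfi⟩ := p_surj hp hbal hMf
      have hfS : f ∈ Finset.univ \ Eset p t := favorite_mem hS
      have hti : t ≤ i := by
        by_contra hc
        push_neg at hc
        exact (Finset.mem_sdiff.1 hfS).2 (mem_Eset.2 ⟨j, i, hi1, hc, hfi⟩)
      have hle1 : (P j).le f (p j t) := by
        rw [hfi]
        exact p_le hp j ht1 hti hi2
      have hle2 : (P j).le (p j t) f :=
        le_favorite hS (Finset.mem_sdiff.2 ⟨Finset.mem_univ _, p_not_mem_E hp ht1 htk⟩)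
      have hf : f = p j t := by
        letI := P j
        exact le_antisymm hle1 hle2
      rw [← hf]
      exact le_favorite hS (Finset.mem_sdiff.2 ⟨Finset.mem_univ _, ho⟩)
  · intro hcond π hπ
    obtain ⟨rounds, hlen, hprops, rfl⟩ := hπ
    intro o
    obtain ⟨i, hi1, hi2, hoi⟩ := p_surj hp hbal (rfl : M o = M o)
    obtain ⟨pre, heq, hmem⟩ := sim hp rounds [] 1 le_rfl (by rw [hlen]; omega)
      (fun r hr => (hprops r hr).2)
      (fun t ha hb j o' ho' => hcond t ha (by rw [hlen] at hb; omega) j o' ho')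
    simp only [List.append_nil, seqAlloc_nil, hE1] at heq
    have hmem' : (M o, p (M o) i) ∈ pre := hmem (M o) i hi1 (by rw [hlen]; omega)
    rw [show ((M o, o) : Fin n × ι) = (M o, p (M o) i) from by rw [← hoi], heq]
    exact hmem'
end

section
/- Let M be a balanced allocation. M is the outcome of every strict alternation policy if and only if for every round index t with 1 ≤ t ≤ k and every agent a_j, the item p_j^t is agent a_j's most preferred item among the items of I not contained in { p_{j'}^i : 1 ≤ j' ≤ n, 1 ≤ i < t } (the items M allocates in earlier rounds). -/
open Finset
open scoped Classical

set_option linter.unusedSectionVars false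

namespace Scratch

variable {ι : Type} [DecidableEq ι] {n : ℕ}

lemma fav_eq (L : LinearOrder ι) (S : Finset ι) (h : S.Nonempty) (x : ι)
    (hx : x ∈ S) (hall : ∀ o ∈ S, L.le o x) : favorite L S h = x :=
  L.le_antisymm _ _ (hall _ (@Finset.max'_mem ι L S h)) (@Finset.le_max' ι L S x hx)

lemma fav_mem (L : LinearOrder ι) (S : Finset ι) (h : S.Nonempty) :
    favorite L S h ∈ S := @Finset.max'_mem ι L S h

lemma fav_le (L : LinearOrder ι) (S : Finset ι) (h : S.Nonempty) (o : ι) (ho : o ∈ S) :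
    L.le o (favorite L S h) := @Finset.le_max' ι L S o ho

lemma mem_snd (P : Fin n → LinearOrder ι) :
    ∀ (l : List (Fin n)) (S : Finset ι) (q : Fin n × ι),
      q ∈ seqAlloc P l S → q.2 ∈ S
  | [], S, q => by simp [seqAlloc]
  | a :: l, S, q => by
    rw [seqAlloc]
    split
    · rename_i h
      intro hq
      rcases List.mem_cons.1 hq with h1 | h1
      · subst h1; exact fav_mem (P a) S h
      · exact Finset.mem_of_mem_erase (mem_snd P l _ q h1)
    · simp

lemma uniquePick (P : Fin n → LinearOrder ι) :
    ∀ (l : List (Fin n)) (S : Finset ι) (a b : Fin n) (x : ι),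
      (a, x) ∈ seqAlloc P l S → (b, x) ∈ seqAlloc P l S → a = b
  | [], S, a, b, x => by simp [seqAlloc]
  | c :: l, S, a, b, x => by
    rw [seqAlloc]
    split
    · rename_i h
      intro ha hb
      rcases List.mem_cons.1 ha with h1 | h1 <;> rcases List.mem_cons.1 hb with h2 | h2
      · exact ((Prod.ext_iff.1 h1).1).trans ((Prod.ext_iff.1 h2).1).symm
      · exfalso
        have hx : x = favorite (P c) S h := (Prod.ext_iff.1 h1).2
        
        have hmem := mem_snd P l _ _ h2
        exact Finset.ne_of_mem_erase hmem (hx ▸ rfl)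
      · exfalso
        have hx : x = favorite (P c) S h := (Prod.ext_iff.1 h2).2
        have hmem := mem_snd P l _ _ h1
        exact Finset.ne_of_mem_erase hmem (hx ▸ rfl)
      · exact uniquePick P l _ a b x h1 h2
    · simp

lemma step (P : Fin n → LinearOrder ι) (p : Fin n → ℕ → ι) (t : ℕ)
    (hinj : ∀ a b : Fin n, p a t = p b t → a = b) :
    ∀ (l rest : List (Fin n)) (S : Finset ι), l.Nodup →
      (∀ a ∈ l, p a t ∈ S) →
      (∀ a ∈ l, ∀ o ∈ S, (P a).le o (p a t)) →
      seqAlloc P (l ++ rest) S =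
        (l.map fun a => (a, p a t)) ++
          seqAlloc P rest (S \ (l.map fun a => p a t).toFinset)
  | [], rest, S => by
    intro _ _ _
    simp
  | a :: l, rest, S => by
    intro hnd hmem hall
    have hS : S.Nonempty := ⟨p a t, hmem a (List.mem_cons_self)⟩
    have hfav : favorite (P a) S hS = p a t :=
      fav_eq _ _ _ _ (hmem a (List.mem_cons_self)) (hall a (List.mem_cons_self))
    have hrec := step P p t hinj l rest (S.erase (p a t)) (List.Nodup.of_cons hnd)
      (by
        intro b hb
        refine Finset.mem_erase.2 ⟨?_, hmem b (List.mem_cons_of_mem a hb)⟩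
        intro he
        exact (List.Nodup.notMem hnd) ((hinj b a he) ▸ hb))
      (by
        intro b hb o ho
        exact hall b (List.mem_cons_of_mem a hb) o (Finset.mem_of_mem_erase ho))
    have hset : (S.erase (p a t)) \ (l.map fun a => p a t).toFinset =
        S \ ((a :: l).map fun a => p a t).toFinset := by
      ext o
      simp only [Finset.mem_sdiff, Finset.mem_erase, List.map_cons, List.toFinset_cons,
        Finset.mem_insert, List.mem_toFinset]
      tauto
    rw [List.cons_append, seqAlloc, dif_pos hS, hfav, hrec, hset]
    simp

noncomputable def Epicks (p : Fin n → ℕ → ι) (t : ℕ) : Finset ι :=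
  Finset.image (fun x : Fin n × ℕ => p x.1 x.2) (Finset.univ ×ˢ Finset.Ico 1 t)

lemma sdiff_round [Fintype ι] (p : Fin n → ℕ → ι) (σ : List (Fin n))
    (hσ : ∀ a : Fin n, a ∈ σ) (t : ℕ) (ht : 1 ≤ t) :
    (Finset.univ \ Epicks p t) \ (σ.map fun a => p a t).toFinset =
      Finset.univ \ Epicks p (t + 1) := by
  ext o
  simp only [Finset.mem_sdiff, Finset.mem_univ, true_and, Epicks, Finset.mem_image,
    Finset.mem_product, Finset.mem_Ico, List.mem_toFinset, List.mem_map]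
  constructor
  · rintro ⟨h1, h2⟩ ⟨x, ⟨hx1, hx2⟩, hx3⟩
    rcases Nat.lt_succ_iff_lt_or_eq.1 hx2 with h | h
    · exact h1 ⟨x, ⟨hx1, h⟩, hx3⟩
    · exact h2 ⟨x.1, hσ x.1, by rw [← hx3, h]⟩
  · intro h
    constructor
    · rintro ⟨x, ⟨hx1, hx2⟩, hx3⟩
      exact h ⟨x, ⟨hx1, Nat.lt_succ_of_lt hx2⟩, hx3⟩
    · rintro ⟨a, _, hc⟩
      exact h ⟨(a, t), ⟨ht, Nat.lt_succ_self t⟩, hc⟩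

lemma prefixRounds [Fintype ι] (P : Fin n → LinearOrder ι) (p : Fin n → ℕ → ι) (k : ℕ)
    (hinj : ∀ (a b : Fin n) (t : ℕ), 1 ≤ t → t ≤ k → p a t = p b t → a = b)
    (hE : ∀ (a : Fin n) (t : ℕ), 1 ≤ t → t ≤ k → p a t ∉ Epicks p t)
    (σ : List (Fin n)) (hσn : σ.Nodup) (hσm : ∀ a : Fin n, a ∈ σ) :
    ∀ m : ℕ, m ≤ k →
      (∀ i, 1 ≤ i → i ≤ m → ∀ (j : Fin n) (o : ι), o ∉ Epicks p i → (P j).le o (p j i)) →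
      ∃ pre : List (Fin n × ι),
        seqAlloc P (List.replicate k σ).flatten Finset.univ =
          pre ++ seqAlloc P (List.replicate (k - m) σ).flatten
            (Finset.univ \ Epicks p (m + 1)) ∧
        ∀ (j : Fin n) (i : ℕ), 1 ≤ i → i ≤ m → (j, p j i) ∈ pre := by
  intro m
  induction m with
  | zero =>
    intro _ _
    refine ⟨[], ?_, ?_⟩
    · have h1 : Epicks p 1 = (∅ : Finset ι) := by simp [Epicks]
      rw [h1]
      simp
    · intro j i h1 h2; omega
  | succ m ih =>
    intro hm hR
    obtain ⟨pre, hpre, hmem⟩ := ih (by omega) (fun i h1 h2 => hR i h1 (by omega))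
    have hrep : k - m = (k - (m + 1)) + 1 := by omega
    have hstep := step P p (m + 1) (fun a b h => hinj a b (m + 1) (by omega) hm h)
      σ (List.replicate (k - (m + 1)) σ).flatten (Finset.univ \ Epicks p (m + 1)) hσn
      (fun a _ => Finset.mem_sdiff.2 ⟨Finset.mem_univ _, hE a (m + 1) (by omega) hm⟩)
      (fun a _ o ho => hR (m + 1) (by omega) (le_refl _) a o (Finset.mem_sdiff.1 ho).2)
    rw [sdiff_round p σ hσm (m + 1) (by omega)] at hstep
    refine ⟨pre ++ σ.map (fun a => (a, p a (m + 1))), ?_, ?_⟩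
    · rw [hpre, hrep, List.replicate_succ, List.flatten_cons, hstep, List.append_assoc]
    · intro j i h1 h2
      rcases Nat.lt_succ_iff_lt_or_eq.1 (Nat.lt_succ_of_le h2) with h | h
      · exact List.mem_append_left _ (hmem j i h1 (by omega))
      · subst h
        exact List.mem_append_right _ (List.mem_map.2 ⟨j, hσm j, rfl⟩)

variable [Fintype ι] {k : ℕ} {P : Fin n → LinearOrder ι} {M : ι → Fin n}
  {p : Fin n → ℕ → ι}

lemma pmono (hp : IsRankingOf P k M p) (j : Fin n) (a b : ℕ)
    (h1 : 1 ≤ a) (hab : a < b) (hbk : b ≤ k) : (P j).lt (p j b) (p j a) := by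
  letI := P j
  have ha := hp j a h1 (le_trans (le_of_lt hab) hbk)
  have hb := hp j b (le_trans h1 (le_of_lt hab)) hbk
  by_contra hcon
  have hne : p j a ≠ p j b := by
    intro he
    rw [he] at ha
    rw [ha.2] at hb
    omega
  have hlt : (P j).lt (p j a) (p j b) := by
    rcases lt_or_gt_of_ne hne with h | h
    · exact h
    · exact absurd h hcon
  have hsub : (Finset.univ.filter (fun o => M o = j ∧ (P j).lt (p j b) o)) ⊂
      (Finset.univ.filter (fun o => M o = j ∧ (P j).lt (p j a) o)) := by
    constructor
    · intro o ho
      simp only [Finset.mem_filter] at *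
      exact ⟨ho.1, ho.2.1, lt_trans hlt ho.2.2⟩
    · intro hsub'
      have hmem : p j b ∈ (Finset.univ.filter (fun o => M o = j ∧ (P j).lt (p j b) o)) :=
        hsub' (by simp only [Finset.mem_filter]; exact ⟨Finset.mem_univ _, hb.1, hlt⟩)
      simp only [Finset.mem_filter] at hmem
      exact lt_irrefl _ hmem.2.2
  have hcards := Finset.card_lt_card hsub
  rw [ha.2, hb.2] at hcards
  omega

lemma pinj2 (hp : IsRankingOf P k M p) (j : Fin n) (a b : ℕ)
    (h1a : 1 ≤ a) (hak : a ≤ k) (h1b : 1 ≤ b) (hbk : b ≤ k) (h : p j a = p j b) :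
    a = b := by
  have ha := (hp j a h1a hak).2
  have hb := (hp j b h1b hbk).2
  rw [h, hb] at ha
  omega

lemma pinj (hp : IsRankingOf P k M p) :
    Set.InjOn (fun x : Fin n × ℕ => p x.1 x.2)
      ((Finset.univ ×ˢ Finset.Ico 1 (k + 1) : Finset (Fin n × ℕ)) : Set (Fin n × ℕ)) := by
  rintro ⟨a, i⟩ ha ⟨b, l⟩ hb h
  simp only [Finset.coe_product, Set.mem_prod, Finset.mem_coe, Finset.mem_Ico] at ha hb
  simp only at h
  have hab : a = b := by
    have h1 := (hp a i ha.2.1 (by omega)).1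
    have h2 := (hp b l hb.2.1 (by omega)).1
    rw [← h1, ← h2, h]
  subst hab
  have := pinj2 hp a i l ha.2.1 (by omega) hb.2.1 (by omega) h
  simp [this]

lemma psurj (hp : IsRankingOf P k M p) (hcard : Fintype.card ι = k * n) (o : ι) :
    ∃ (j : Fin n) (i : ℕ), 1 ≤ i ∧ i ≤ k ∧ p j i = o := by
  have himg : (Finset.univ ×ˢ Finset.Ico 1 (k + 1)).image
      (fun x : Fin n × ℕ => p x.1 x.2) = Finset.univ := by
    apply Finset.eq_univ_of_card
    rw [Finset.card_image_of_injOn (pinj hp), Finset.card_product, Finset.card_univ,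
      Fintype.card_fin, Nat.card_Ico, hcard, Nat.add_sub_cancel, Nat.mul_comm]
  have ho : o ∈ (Finset.univ ×ˢ Finset.Ico 1 (k + 1)).image
      (fun x : Fin n × ℕ => p x.1 x.2) := himg ▸ Finset.mem_univ o
  simp only [Finset.mem_image, Finset.mem_product, Finset.mem_Ico] at ho
  obtain ⟨x, ⟨_, hx1, hx2⟩, hx3⟩ := ho
  exact ⟨x.1, x.2, hx1, by omega, hx3⟩

lemma pnotE (hp : IsRankingOf P k M p) (a : Fin n) (t : ℕ) (h1 : 1 ≤ t) (h2 : t ≤ k) :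
    p a t ∉ Epicks p t := by
  simp only [Epicks, Finset.mem_image, Finset.mem_product, Finset.mem_Ico]
  rintro ⟨x, ⟨_, hx1, hx2⟩, hx3⟩
  have hj : x.1 = a := by
    have e1 := (hp x.1 x.2 hx1 (by omega)).1
    have e2 := (hp a t h1 h2).1
    rw [← e1, ← e2, hx3]
  rw [hj] at hx3
  have := pinj2 hp a x.2 t hx1 (by omega) h1 h2 hx3
  omega

lemma sigma_exists (hn : 0 < n) (j : Fin n) :
    ∃ σ : List (Fin n), σ.length = n ∧ (∀ a, σ.count a = 1) ∧ ∃ tail, σ = j :: tail := by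
  refine ⟨j :: (List.finRange n).erase j, ?_, ?_, _, rfl⟩
  · rw [List.length_cons, List.length_erase_of_mem (List.mem_finRange j),
      List.length_finRange]
    omega
  · intro a
    rw [List.count_cons, List.count_erase,
      List.count_eq_one_of_mem (List.nodup_finRange n) (List.mem_finRange a)]
    by_cases h : j = a <;> simp [h]

theorem main {ι : Type} [Fintype ι] [DecidableEq ι] {n k : ℕ} (hn : 0 < n) (hk : 1 ≤ k)
    (hcard : Fintype.card ι = k * n)
    (P : Fin n → LinearOrder ι) (M : ι → Fin n)
    (p : Fin n → ℕ → ι) (hp : IsRankingOf P k M p) :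
    (∀ π : List (Fin n), StrictAlt n k π → IsOutcome P π M) ↔
      ∀ t : ℕ, 1 ≤ t → t ≤ k → ∀ j : Fin n, ∀ o : ι,
        o ∉ Finset.image (fun x : Fin n × ℕ => p x.1 x.2)
              (Finset.univ ×ˢ Finset.Ico 1 t) →
        (P j).le o (p j t) := by
  have hinj : ∀ (a b : Fin n) (t : ℕ), 1 ≤ t → t ≤ k → p a t = p b t → a = b := by
    intro a b t h1 h2 h
    rw [← (hp a t h1 h2).1, ← (hp b t h1 h2).1, h]
  constructor
  · intro hout
    intro t
    induction t using Nat.strong_induction_on with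
    | _ t ih =>
      intro h1t htk j o hoE
      obtain ⟨σ, hlen, hcount, tail, hσtail⟩ := sigma_exists hn j
      have hσn : σ.Nodup := List.nodup_iff_count_le_one.2 (fun a => le_of_eq (hcount a))
      have hσm : ∀ a : Fin n, a ∈ σ := fun a =>
        List.count_pos_iff.1 (by rw [hcount a]; omega)
      subst hσtail
      obtain ⟨pre, hpre, -⟩ := prefixRounds P p k hinj (pnotE hp) (j :: tail) hσn hσm (t - 1)
        (by omega) (fun i hi1 hi2 => ih i (by omega) hi1 (by omega))
      have ht1 : t - 1 + 1 = t := by omega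
      have hrep : k - (t - 1) = (k - t) + 1 := by omega
      rw [ht1, hrep, List.replicate_succ, List.flatten_cons, List.cons_append] at hpre
      have hS : (Finset.univ \ Epicks p t).Nonempty :=
        ⟨p j t, Finset.mem_sdiff.2 ⟨Finset.mem_univ _, pnotE hp j t h1t htk⟩⟩
      rw [seqAlloc, dif_pos hS] at hpre
      set x := favorite (P j) (Finset.univ \ Epicks p t) hS with hxdef
      have hπ : StrictAlt n k ((List.replicate k (j :: tail)).flatten) :=
        ⟨j :: tail, hlen, hcount, rfl⟩
      have hmemjx : (j, x) ∈ seqAlloc P (List.replicate k (j :: tail)).flatten Finset.univ := by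
        rw [hpre]
        exact List.mem_append_right _ (List.mem_cons_self)
      have hMx : M x = j := uniquePick P _ _ _ _ _ (hout _ hπ x) hmemjx
      obtain ⟨j', i, hi1, hik, hpx⟩ := psurj hp hcard x
      have hj' : j' = j := by rw [← hMx, ← hpx, (hp j' i hi1 hik).1]
      subst hj'
      have hxnE : x ∉ Epicks p t := (Finset.mem_sdiff.1 (fav_mem _ _ hS)).2
      have hti : t ≤ i := by
        by_contra hc
        exact hxnE (by
          rw [← hpx]
          exact Finset.mem_image.2 ⟨(j', i), Finset.mem_product.2
            ⟨Finset.mem_univ _, Finset.mem_Ico.2 ⟨hi1, by omega⟩⟩, rfl⟩)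
      have hle1 : (P j').le x (p j' t) := by
        rcases eq_or_lt_of_le hti with h | h
        · rw [← hpx, h]
          exact (P j').le_refl _
        · rw [← hpx]
          letI := P j'
          exact le_of_lt (pmono hp j' t i h1t h hik)
      have hle2 : (P j').le (p j' t) x :=
        fav_le _ _ hS _ (Finset.mem_sdiff.2 ⟨Finset.mem_univ _, pnotE hp j' t h1t htk⟩)
      have hx : x = p j' t := (P j').le_antisymm _ _ hle1 hle2
      have := fav_le (P j') _ hS o (Finset.mem_sdiff.2 ⟨Finset.mem_univ _, hoE⟩)
      rw [← hxdef, hx] at this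
      exact this
  · rintro hR π ⟨σ, hlen, hcount, rfl⟩ o
    have hσn : σ.Nodup := List.nodup_iff_count_le_one.2 (fun a => le_of_eq (hcount a))
    have hσm : ∀ a : Fin n, a ∈ σ := fun a =>
      List.count_pos_iff.1 (by rw [hcount a]; omega)
    obtain ⟨j, i, hi1, hik, rfl⟩ := psurj hp hcard o
    obtain ⟨pre, hpre, hmem⟩ := prefixRounds P p k hinj (pnotE hp) σ hσn hσm k (le_refl k)
      (fun i h1 h2 j o ho => hR i h1 h2 j o ho)
    rw [(hp j i hi1 hik).1, hpre]
    exact List.mem_append_left _ (hmem j i hi1 hik)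


end Scratch

/-- A balanced allocation `M` is the outcome of every strict alternation
policy if and only if for every round `1 ≤ t ≤ k` and every agent `j`, the item `p j t`
is `j`'s most preferred item among the items not allocated by `M` in earlier rounds. -/
theorem necessary_assignment_strict_alternation
    {ι : Type} [Fintype ι] [DecidableEq ι] {n k : ℕ} (hn : 0 < n) (hk : 1 ≤ k)
    (hcard : Fintype.card ι = k * n)
    (P : Fin n → LinearOrder ι) (M : ι → Fin n) (hbal : BalancedAlloc k M)
    (p : Fin n → ℕ → ι) (hp : IsRankingOf P k M p) :
    (∀ π : List (Fin n), StrictAlt n k π → IsOutcome P π M) ↔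
      ∀ t : ℕ, 1 ≤ t → t ≤ k → ∀ j : Fin n, ∀ o : ι,
        o ∉ Finset.image (fun x : Fin n × ℕ => p x.1 x.2)
              (Finset.univ ×ˢ Finset.Ico 1 t) →
        (P j).le o (p j t) := by
  exact Scratch.main hn hk hcard P M p hp
end

section
/- Let S ⊆ I, let a_i be an agent, and let o be agent a_i's most preferred item in I, and suppose o ∈ S (so o is the most preferred item of S for a_i). If there exists a policy under which agent a_i receives exactly the set S, then there exists a policy whose first turn belongs to a_i (so that a_i picks o at the first turn) under which a_i receives exactly the set S. -/
open Finset
open scoped Classical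

/-- Remaining items after processing the turns `L` starting from item set `T`. -/
noncomputable def remSet {n : ℕ} {ι : Type} [DecidableEq ι]
    (P : Fin n → LinearOrder ι) : List (Fin n) → Finset ι → Finset ι
  | [], T => T
  | a :: rest, T =>
    if h : T.Nonempty then remSet P rest (T.erase (favorite (P a) T h)) else T

lemma seqAlloc_of_empty {n : ℕ} {ι : Type} [DecidableEq ι]
    (P : Fin n → LinearOrder ι) (L : List (Fin n)) {T : Finset ι} (hT : ¬ T.Nonempty) :
    seqAlloc P L T = [] := by
  cases L with
  | nil => rfl
  | cons a rest => simp [seqAlloc, hT]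

lemma remSet_of_empty {n : ℕ} {ι : Type} [DecidableEq ι]
    (P : Fin n → LinearOrder ι) (L : List (Fin n)) {T : Finset ι} (hT : ¬ T.Nonempty) :
    remSet P L T = T := by
  cases L with
  | nil => rfl
  | cons a rest => simp [remSet, hT]

lemma seqAlloc_append {n : ℕ} {ι : Type} [DecidableEq ι]
    (P : Fin n → LinearOrder ι) (L1 L2 : List (Fin n)) (T : Finset ι) :
    seqAlloc P (L1 ++ L2) T = seqAlloc P L1 T ++ seqAlloc P L2 (remSet P L1 T) := by
  induction L1 generalizing T with
  | nil => simp [seqAlloc, remSet]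
  | cons a rest ih =>
    by_cases h : T.Nonempty
    · simp only [List.cons_append, seqAlloc, remSet, dif_pos h, List.cons_append]
      rw [ih]
    · rw [seqAlloc_of_empty P _ h, seqAlloc_of_empty P _ h, remSet_of_empty P _ h,
        seqAlloc_of_empty P _ h]
      rfl

lemma seqAlloc_mem_fst {n : ℕ} {ι : Type} [DecidableEq ι]
    (P : Fin n → LinearOrder ι) {L : List (Fin n)} {T : Finset ι} {a : Fin n} {x : ι}
    (h : (a, x) ∈ seqAlloc P L T) : a ∈ L := by
  induction L generalizing T with
  | nil => simp [seqAlloc] at h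
  | cons b rest ih =>
    by_cases hT : T.Nonempty
    · rw [seqAlloc, dif_pos hT] at h
      rcases List.mem_cons.mp h with h | h
      · simp at h; simp [h.1]
      · exact List.mem_cons_of_mem _ (ih h)
    · rw [seqAlloc_of_empty P _ hT] at h; simp at h

lemma seqAlloc_mem_snd {n : ℕ} {ι : Type} [DecidableEq ι]
    (P : Fin n → LinearOrder ι) {L : List (Fin n)} {T : Finset ι} {a : Fin n} {x : ι}
    (h : (a, x) ∈ seqAlloc P L T) : x ∈ T := by
  induction L generalizing T with
  | nil => simp [seqAlloc] at h
  | cons b rest ih =>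
    by_cases hT : T.Nonempty
    · rw [seqAlloc, dif_pos hT] at h
      rcases List.mem_cons.mp h with h | h
      · simp at h
        rw [h.2]
        exact @Finset.max'_mem ι (P b) T hT
      · exact Finset.mem_of_mem_erase (ih h)
    · rw [seqAlloc_of_empty P _ hT] at h; simp at h

lemma seqAlloc_unique {n : ℕ} {ι : Type} [DecidableEq ι]
    (P : Fin n → LinearOrder ι) {L : List (Fin n)} {T : Finset ι} {a b : Fin n} {x : ι}
    (ha : (a, x) ∈ seqAlloc P L T) (hb : (b, x) ∈ seqAlloc P L T) : a = b := by
  induction L generalizing T with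
  | nil => simp [seqAlloc] at ha
  | cons c rest ih =>
    by_cases hT : T.Nonempty
    · rw [seqAlloc, dif_pos hT] at ha hb
      set f := favorite (P c) T hT with hf
      rcases List.mem_cons.mp ha with ha' | ha' <;> rcases List.mem_cons.mp hb with hb' | hb'
      · rw [show a = c from congrArg Prod.fst ha', show b = c from congrArg Prod.fst hb']
      · exfalso
        have hx : x = f := congrArg Prod.snd ha'
        have := seqAlloc_mem_snd P hb'
        rw [hx] at this
        exact (Finset.notMem_erase f T) this
      · exfalso
        have hx : x = f := congrArg Prod.snd hb'
        have := seqAlloc_mem_snd P ha'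
        rw [hx] at this
        exact (Finset.notMem_erase f T) this
      · exact ih ha' hb'
    · rw [seqAlloc_of_empty P _ hT] at ha; simp at ha

lemma favorite_eq_of_top {n : ℕ} {ι : Type} (P : Fin n → LinearOrder ι)
    (a : Fin n) {T : Finset ι} (hT : T.Nonempty) {o : ι}
    (htop : ∀ x : ι, (P a).le x o) (ho : o ∈ T) : favorite (P a) T hT = o := by
  refine @le_antisymm ι (P a).toPartialOrder _ _ ?_ ?_
  · exact htop _
  · exact @Finset.le_max' ι (P a) T o ho

/-- If `o` is never picked while processing `L` on `T`, then removing `o` from the pool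
changes neither the pick list nor the remaining set (apart from `o`). -/
lemma seqAlloc_erase_unpicked {n : ℕ} {ι : Type} [DecidableEq ι]
    (P : Fin n → LinearOrder ι) (L : List (Fin n)) (T : Finset ι) (o : ι)
    (ho : o ∈ T) (hnp : ∀ a : Fin n, (a, o) ∉ seqAlloc P L T) :
    seqAlloc P L (T.erase o) = seqAlloc P L T ∧
      remSet P L (T.erase o) = (remSet P L T).erase o := by
  induction L generalizing T with
  | nil => exact ⟨rfl, rfl⟩
  | cons a rest ih =>
    have hT : T.Nonempty := ⟨o, ho⟩
    set f := favorite (P a) T hT with hf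
    have hfo : f ≠ o := by
      intro h
      apply hnp a
      rw [seqAlloc, dif_pos hT, ← hf, h]
      exact List.mem_cons_self
    have hTe : (T.erase o).Nonempty := by
      refine ⟨f, Finset.mem_erase.mpr ⟨hfo, @Finset.max'_mem ι (P a) T hT⟩⟩
    have hfav : favorite (P a) (T.erase o) hTe = f := by
      refine @le_antisymm ι (P a).toPartialOrder _ _ ?_ ?_
      · exact @Finset.max'_le ι (P a) _ hTe _ (fun y hy =>
          @Finset.le_max' ι (P a) T y (Finset.mem_of_mem_erase hy))
      · exact @Finset.le_max' ι (P a) _ f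
          (Finset.mem_erase.mpr ⟨hfo, @Finset.max'_mem ι (P a) T hT⟩)
    have ho' : o ∈ T.erase f := Finset.mem_erase.mpr ⟨fun h => hfo h.symm, ho⟩
    have hnp' : ∀ b : Fin n, (b, o) ∉ seqAlloc P rest (T.erase f) := by
      intro b hb
      apply hnp b
      rw [seqAlloc, dif_pos hT, ← hf]
      exact List.mem_cons_of_mem _ hb
    obtain ⟨ih1, ih2⟩ := ih (T.erase f) ho' hnp'
    have hcomm : (T.erase o).erase f = (T.erase f).erase o := Finset.erase_right_comm
    constructor
    · rw [seqAlloc, dif_pos hTe, seqAlloc, dif_pos hT, ← hf, hfav, hcomm, ih1]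
    · rw [remSet, dif_pos hTe, remSet, dif_pos hT, ← hf, hfav, hcomm, ih2]

lemma exists_first_occ {α : Type} [DecidableEq α] {a : α} {l : List α} (h : a ∈ l) :
    ∃ s t, l = s ++ a :: t ∧ a ∉ s := by
  induction l with
  | nil => simp at h
  | cons b rest ih =>
    by_cases hab : a = b
    · exact ⟨[], rest, by simp [hab], by simp⟩
    · rcases List.mem_cons.mp h with h | h
      · exact absurd h hab
      · obtain ⟨s, t, hst, hs⟩ := ih h
        exact ⟨b :: s, t, by rw [hst]; rfl, by simp [hs, hab]⟩

/-- If `o` is agent `a_i`'s most preferred item in `I` and `o ∈ S`, and some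
policy gives `a_i` exactly the set `S`, then some policy whose first turn belongs to
`a_i` also gives `a_i` exactly the set `S`. -/
theorem first_pick_by_target_agent
    {ι : Type} [Fintype ι] [DecidableEq ι] {n k : ℕ} (hn : 0 < n) (hk : 1 ≤ k)
    (hcard : Fintype.card ι = k * n)
    (P : Fin n → LinearOrder ι) (S : Finset ι) (ai : Fin n) (o : ι)
    (htop : ∀ x : ι, (P ai).le x o) (hoS : o ∈ S)
    (h : ∃ π : List (Fin n), π.length = k * n ∧ receives P π ai = S) :
    ∃ π : List (Fin n), π.length = k * n ∧ π.head? = some ai ∧ receives P π ai = S := by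
  obtain ⟨π, hlen, hrec⟩ := h
  -- o is picked by ai under π
  have hoP : (ai, o) ∈ seqAlloc P π Finset.univ := by
    have : o ∈ receives P π ai := hrec ▸ hoS
    simpa [receives] using this
  have haiπ : ai ∈ π := seqAlloc_mem_fst P hoP
  obtain ⟨pre, post, hπ, hpre⟩ := exists_first_occ haiπ
  set T := remSet P pre (Finset.univ : Finset ι) with hT
  have hsplit : seqAlloc P π Finset.univ =
      seqAlloc P pre Finset.univ ++ seqAlloc P (ai :: post) T := by
    rw [hπ, seqAlloc_append]
  -- (ai, o) is not in the prefix picks (ai ∉ pre)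
  have hoT : (ai, o) ∈ seqAlloc P (ai :: post) T := by
    rw [hsplit] at hoP
    rcases List.mem_append.mp hoP with h' | h'
    · exact absurd (seqAlloc_mem_fst P h') hpre
    · exact h'
  have hTne : T.Nonempty := by
    by_contra hne
    rw [seqAlloc_of_empty P _ hne] at hoT
    simp at hoT
  have hoinT : o ∈ T := seqAlloc_mem_snd P hoT
  have hfavT : favorite (P ai) T hTne = o := favorite_eq_of_top P ai hTne htop hoinT
  -- ai's first pick under π is exactly o
  have hcons : seqAlloc P (ai :: post) T =
      (ai, o) :: seqAlloc P post (T.erase o) := by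
    rw [seqAlloc, dif_pos hTne, hfavT]
  -- nobody picks o during pre
  have hnp : ∀ a : Fin n, (a, o) ∉ seqAlloc P pre Finset.univ := by
    intro a ha
    have ha' : (a, o) ∈ seqAlloc P π Finset.univ := by
      rw [hsplit]; exact List.mem_append_left _ ha
    have : a = ai := seqAlloc_unique P ha' hoP
    exact hpre (this ▸ seqAlloc_mem_fst P ha)
  obtain ⟨he1, he2⟩ := seqAlloc_erase_unpicked P pre Finset.univ o (Finset.mem_univ o) hnp
  -- the new policy
  refine ⟨ai :: (pre ++ post), ?_, rfl, ?_⟩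
  · rw [← hlen, hπ]; simp; omega
  · have huniv : (Finset.univ : Finset ι).Nonempty := by
      rw [← Finset.card_pos, Finset.card_univ, hcard]
      exact Nat.mul_pos hk hn
    have hfavU : favorite (P ai) Finset.univ huniv = o :=
      favorite_eq_of_top P ai huniv htop (Finset.mem_univ o)
    have hnew : seqAlloc P (ai :: (pre ++ post)) Finset.univ =
        (ai, o) :: (seqAlloc P pre Finset.univ ++ seqAlloc P post (T.erase o)) := by
      rw [seqAlloc, dif_pos huniv, hfavU, seqAlloc_append, he1, he2, ← hT]
    rw [← hrec]
    unfold receives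
    ext x
    simp only [Finset.mem_filter, Finset.mem_univ, true_and, hnew, hsplit, hcons,
      List.mem_append, List.mem_cons]
    tauto
end

section
/- Let S ⊆ I, let a_i be an agent, let a_j ≠ a_i be another agent, and suppose agent a_j's most preferred item in I is an item o' with o' ∉ S. If there exists a policy under which agent a_i receives exactly the set S, then there exists a policy whose first turn belongs to a_j (so that a_j picks o' at the first turn) under which a_i receives exactly the set S. -/
open Finset
open scoped Classical

lemma myEraseComm {ι : Type} [DecidableEq ι] (s : Finset ι) (a b : ι) :
    (s.erase a).erase b = (s.erase b).erase a := by
  ext x; simp only [Finset.mem_erase]; tauto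

lemma favorite_erase {ι : Type} [DecidableEq ι] (L : LinearOrder ι) {S : Finset ι} {x : ι}
    (h : S.Nonempty) (h' : (S.erase x).Nonempty) (hne : favorite L S h ≠ x) :
    favorite L (S.erase x) h' = favorite L S h := by
  letI := L
  unfold favorite
  apply le_antisymm
  · exact Finset.max'_le _ h' _ (fun b hb => Finset.le_max' _ _ (Finset.mem_of_mem_erase hb))
  · exact Finset.le_max' _ _ (Finset.mem_erase.mpr ⟨hne, Finset.max'_mem _ h⟩)

lemma seqAlloc_mem_subset {n : ℕ} {ι : Type} [DecidableEq ι] (P : Fin n → LinearOrder ι) :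
    ∀ (l : List (Fin n)) (S : Finset ι) (a : Fin n) (o : ι),
    (a, o) ∈ seqAlloc P l S → o ∈ S
  | [], S, a, o => by simp [seqAlloc]
  | b :: rest, S, a, o => by
    intro hmem
    rw [seqAlloc] at hmem
    split_ifs at hmem with hne
    · rcases List.mem_cons.mp hmem with h1 | h2
      · injection h1 with h1a h1b
        subst h1b
        exact @Finset.max'_mem ι (P b) S hne
      · exact Finset.mem_of_mem_erase (seqAlloc_mem_subset P rest _ a o h2)
    · simp at hmem

lemma seqAlloc_all_picked {n : ℕ} {ι : Type} [DecidableEq ι] (P : Fin n → LinearOrder ι) :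
    ∀ (l : List (Fin n)) (S : Finset ι), S.card ≤ l.length →
    ∀ o ∈ S, ∃ b, (b, o) ∈ seqAlloc P l S
  | [], S, hle, o, ho => by
    simp only [List.length_nil, Nat.le_zero, Finset.card_eq_zero] at hle
    subst hle; simp at ho
  | a :: rest, S, hle, o, ho => by
    have hS : S.Nonempty := ⟨o, ho⟩
    rw [seqAlloc, dif_pos hS]
    by_cases heq : o = favorite (P a) S hS
    · exact ⟨a, by rw [heq]; exact List.mem_cons_self⟩
    · have hcard : (S.erase (favorite (P a) S hS)).card ≤ rest.length := by
        rw [Finset.card_erase_of_mem (show favorite (P a) S hS ∈ S from @Finset.max'_mem ι (P a) S hS)]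
        simp only [List.length_cons] at hle
        omega
      obtain ⟨b, hb⟩ := seqAlloc_all_picked P rest _ hcard o
        (Finset.mem_erase.mpr ⟨heq, ho⟩)
      exact ⟨b, List.mem_cons_of_mem _ hb⟩

lemma seqAlloc_erase {n : ℕ} {ι : Type} [DecidableEq ι] (P : Fin n → LinearOrder ι) :
    ∀ (l : List (Fin n)) (S : Finset ι) (o' : ι), o' ∈ S →
    (∃ b, (b, o') ∈ seqAlloc P l S) →
    ∃ l' : List (Fin n), l'.length + 1 = l.length ∧
      ∀ (a : Fin n) (o : ι), o ≠ o' →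
        ((a, o) ∈ seqAlloc P l' (S.erase o') ↔ (a, o) ∈ seqAlloc P l S)
  | [], S, o', ho', hpick => by
    obtain ⟨b, hb⟩ := hpick
    simp [seqAlloc] at hb
  | a :: rest, S, o', ho', hpick => by
    have hS : S.Nonempty := ⟨o', ho'⟩
    by_cases hf : favorite (P a) S hS = o'
    · refine ⟨rest, by simp, fun a' o hno => ?_⟩
      rw [seqAlloc, dif_pos hS, hf, List.mem_cons]
      constructor
      · intro h; exact Or.inr h
      · rintro (h1 | h2)
        · exact absurd (congrArg Prod.snd h1) hno
        · exact h2
    · obtain ⟨b, hb⟩ := hpick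
      rw [seqAlloc, dif_pos hS, List.mem_cons] at hb
      have hb' : (b, o') ∈ seqAlloc P rest (S.erase (favorite (P a) S hS)) := by
        rcases hb with h1 | h2
        · exact absurd (congrArg Prod.snd h1).symm hf
        · exact h2
      have ho'e : o' ∈ S.erase (favorite (P a) S hS) :=
        Finset.mem_erase.mpr ⟨fun h => hf h.symm, ho'⟩
      obtain ⟨rest', hlen, hiff⟩ := seqAlloc_erase P rest _ o' ho'e ⟨b, hb'⟩
      refine ⟨a :: rest', by simp [← hlen], fun a' o hno => ?_⟩
      have hS' : (S.erase o').Nonempty :=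
        ⟨favorite (P a) S hS, Finset.mem_erase.mpr ⟨hf, @Finset.max'_mem ι (P a) S hS⟩⟩
      rw [seqAlloc, dif_pos hS', seqAlloc, dif_pos hS,
        favorite_erase (P a) hS hS' hf, List.mem_cons, List.mem_cons,
        myEraseComm]
      constructor
      · rintro (h1 | h2)
        · exact Or.inl h1
        · exact Or.inr ((hiff a' o hno).mp h2)
      · rintro (h1 | h2)
        · exact Or.inl h1
        · exact Or.inr ((hiff a' o hno).mpr h2)

/-- If agent `a_j ≠ a_i` has most preferred item `o' ∉ S`, and some policy
gives `a_i` exactly the set `S`, then some policy whose first turn belongs to `a_j`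
also gives `a_i` exactly the set `S`. -/
theorem first_pick_by_other_agent
    {ι : Type} [Fintype ι] [DecidableEq ι] {n k : ℕ} (hn : 0 < n) (hk : 1 ≤ k)
    (hcard : Fintype.card ι = k * n)
    (P : Fin n → LinearOrder ι) (S : Finset ι) (ai aj : Fin n) (hij : aj ≠ ai) (o' : ι)
    (htop : ∀ x : ι, (P aj).le x o') (ho'S : o' ∉ S)
    (h : ∃ π : List (Fin n), π.length = k * n ∧ receives P π ai = S) :
    ∃ π : List (Fin n), π.length = k * n ∧ π.head? = some aj ∧ receives P π ai = S := by
  obtain ⟨π, hlen, hrec⟩ := h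
  have hcard_univ : (Finset.univ : Finset ι).card = k * n := by simpa using hcard
  have huniv_ne : (Finset.univ : Finset ι).Nonempty := by
    rw [← Finset.card_pos, hcard_univ]
    exact Nat.mul_pos hk hn
  have hSmem : ∀ o : ι, o ∈ S ↔ (ai, o) ∈ seqAlloc P π Finset.univ := by
    intro o
    rw [← hrec]
    simp [receives]
  have hpicked : ∃ b, (b, o') ∈ seqAlloc P π Finset.univ :=
    seqAlloc_all_picked P π Finset.univ (by rw [hcard_univ, hlen]) o' (Finset.mem_univ _)
  obtain ⟨π'', hlen'', hiff⟩ := seqAlloc_erase P π Finset.univ o' (Finset.mem_univ _) hpicked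
  refine ⟨aj :: π'', by simp only [List.length_cons, hlen'']; omega, rfl, ?_⟩
  have hfav : favorite (P aj) Finset.univ huniv_ne = o' := by
    letI := P aj
    unfold favorite
    apply le_antisymm
    · exact Finset.max'_le _ _ _ (fun y _ => htop y)
    · exact Finset.le_max' _ _ (Finset.mem_univ _)
  ext o
  rw [← hrec]
  simp only [receives, Finset.mem_filter, Finset.mem_univ, true_and]
  rw [seqAlloc, dif_pos huniv_ne, hfav, List.mem_cons]
  by_cases ho : o = o'
  · rw [ho]
    constructor
    · rintro (h1 | h2)
      · exact absurd (congrArg Prod.fst h1).symm hij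
      · exact absurd (seqAlloc_mem_subset P π'' _ _ _ h2) (by simp)
    · intro hS
      exact absurd ((hSmem o').mpr hS) ho'S
  · rw [hiff ai o ho]
    constructor
    · rintro (h1 | h2)
      · exact absurd (congrArg Prod.snd h1) ho
      · exact h2
    · exact Or.inr
end

section
/- Suppose item o is ranked at the k'-th position in agent a_1's preference, with k' ≤ k, and let I* denote agent a_1's k'−1 most preferred items. Then there exists a balanced policy under which agent a_1 does not receive item o if and only if there exist a set I' ⊆ I ∖ (I* ∪ {o}) with |I'| = k−k'+1 and an assignment of all items of I ∖ (I' ∪ I*) to the agents other than a_1 in which each such agent receives exactly k items and every such agent strictly prefers each item she receives to every item of I'. -/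
open Finset
open scoped Classical

namespace SeqAux

variable {n : ℕ} {ι : Type} [DecidableEq ι]

/-- The items remaining after running the policy `π` from item set `S`. -/
noncomputable def rem (P : Fin n → LinearOrder ι) : List (Fin n) → Finset ι → Finset ι
  | [], S => S
  | a :: t, S => if h : S.Nonempty then rem P t (S.erase (favorite (P a) S h)) else S

variable (P : Fin n → LinearOrder ι)

lemma seqAlloc_cons (a : Fin n) (t : List (Fin n)) (S : Finset ι) :
    seqAlloc P (a :: t) S = if h : S.Nonempty then
      (a, favorite (P a) S h) :: seqAlloc P t (S.erase (favorite (P a) S h)) else [] := by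
  rfl

lemma rem_cons (a : Fin n) (t : List (Fin n)) (S : Finset ι) :
    rem P (a :: t) S = if h : S.Nonempty then
      rem P t (S.erase (favorite (P a) S h)) else S := rfl

lemma seqAlloc_empty (π : List (Fin n)) : seqAlloc P π (∅ : Finset ι) = [] := by
  cases π with
  | nil => rfl
  | cons a t => rw [seqAlloc_cons]; simp

lemma rem_empty (π : List (Fin n)) : rem P π (∅ : Finset ι) = ∅ := by
  cases π with
  | nil => rfl
  | cons a t => rw [rem_cons]; simp

lemma rem_subset (π : List (Fin n)) (S : Finset ι) : rem P π S ⊆ S := by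
  induction π generalizing S with
  | nil => exact Finset.Subset.refl S
  | cons a t ih =>
      rw [rem_cons]
      by_cases h : S.Nonempty
      · rw [dif_pos h]
        exact (ih _).trans (Finset.erase_subset _ _)
      · rw [dif_neg h]

lemma mem_seqAlloc_snd {π : List (Fin n)} {S : Finset ι} {b : Fin n} {x : ι}
    (h : (b, x) ∈ seqAlloc P π S) : x ∈ S ∧ x ∉ rem P π S := by
  induction π generalizing S with
  | nil => simp [seqAlloc] at h
  | cons a t ih =>
      rw [seqAlloc_cons] at h
      by_cases hS : S.Nonempty
      · rw [dif_pos hS] at h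
        rw [rem_cons, dif_pos hS]
        rcases List.mem_cons.1 h with h1 | h1
        · injection h1 with hb hx
          subst hx
          refine ⟨@Finset.max'_mem ι (P a) S hS, fun hc => ?_⟩
          exact (Finset.notMem_erase _ _) (rem_subset P t _ hc)
        · have := ih h1
          exact ⟨Finset.mem_of_mem_erase this.1, this.2⟩
      · rw [dif_neg hS] at h; simp at h

lemma mem_seqAlloc_fst {π : List (Fin n)} {S : Finset ι} {b : Fin n} {x : ι}
    (h : (b, x) ∈ seqAlloc P π S) : b ∈ π := by
  induction π generalizing S with
  | nil => simp [seqAlloc] at h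
  | cons a t ih =>
      rw [seqAlloc_cons] at h
      by_cases hS : S.Nonempty
      · rw [dif_pos hS] at h
        rcases List.mem_cons.1 h with h1 | h1
        · injection h1 with hb hx
          simp [hb]
        · exact List.mem_cons_of_mem _ (ih h1)
      · rw [dif_neg hS] at h; simp at h

lemma exists_mem_seqAlloc {π : List (Fin n)} {S : Finset ι} {x : ι}
    (hx : x ∈ S) (hr : x ∉ rem P π S) : ∃ b, (b, x) ∈ seqAlloc P π S := by
  induction π generalizing S with
  | nil => exact absurd hx hr
  | cons a t ih =>
      by_cases hS : S.Nonempty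
      · rw [rem_cons, dif_pos hS] at hr
        rw [seqAlloc_cons]
        by_cases hxf : x = favorite (P a) S hS
        · refine ⟨a, ?_⟩
          rw [dif_pos hS, hxf]
          exact List.mem_cons_self
        · obtain ⟨b, hb⟩ := ih (Finset.mem_erase.2 ⟨hxf, hx⟩) hr
          exact ⟨b, by rw [dif_pos hS]; exact List.mem_cons_of_mem _ hb⟩
      · rw [rem_cons, dif_neg hS] at hr
        exact absurd hx hr

lemma seqAlloc_fst_unique {π : List (Fin n)} {S : Finset ι} {b b' : Fin n} {x : ι}
    (h : (b, x) ∈ seqAlloc P π S) (h' : (b', x) ∈ seqAlloc P π S) : b = b' := by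
  induction π generalizing S with
  | nil => simp [seqAlloc] at h
  | cons a t ih =>
      rw [seqAlloc_cons] at h h'
      by_cases hS : S.Nonempty
      · rw [dif_pos hS] at h h'
        rcases List.mem_cons.1 h with h1 | h1 <;> rcases List.mem_cons.1 h' with h2 | h2
        · injection h1 with hb _; injection h2 with hb' _; rw [hb, hb']
        · injection h1 with hb hx
          exact absurd ((mem_seqAlloc_snd P h2).1) (by rw [hx]; exact Finset.notMem_erase _ _)
        · injection h2 with hb hx
          exact absurd ((mem_seqAlloc_snd P h1).1) (by rw [hx]; exact Finset.notMem_erase _ _)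
        · exact ih h1 h2
      · rw [dif_neg hS] at h; simp at h

lemma lt_of_mem_rem {π : List (Fin n)} {S : Finset ι} {b : Fin n} {x y : ι}
    (h : (b, x) ∈ seqAlloc P π S) (hy : y ∈ rem P π S) : (P b).lt y x := by
  induction π generalizing S with
  | nil => simp [seqAlloc] at h
  | cons a t ih =>
      by_cases hS : S.Nonempty
      · rw [seqAlloc_cons, dif_pos hS] at h
        rw [rem_cons, dif_pos hS] at hy
        rcases List.mem_cons.1 h with h1 | h1
        · injection h1 with hb hx
          subst hb; subst hx
          have hyS : y ∈ S.erase (favorite (P b) S hS) := rem_subset P t _ hy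
          have hyne : y ≠ favorite (P b) S hS := (Finset.mem_erase.1 hyS).1
          have hle : (P b).le y (favorite (P b) S hS) :=
            @Finset.le_max' ι (P b) S y (Finset.mem_of_mem_erase hyS)
          exact @lt_of_le_of_ne ι (P b).toPartialOrder _ _ hle hyne
        · exact ih h1 hy
      · rw [seqAlloc_cons, dif_neg hS] at h; simp at h

lemma card_rem {π : List (Fin n)} {S : Finset ι} (h : π.length ≤ S.card) :
    (rem P π S).card = S.card - π.length := by
  induction π generalizing S with
  | nil => simp [rem]
  | cons a t ih =>
      have hS : S.Nonempty := by
        rw [← Finset.card_pos]; have := h; simp [List.length_cons] at this; omega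
      rw [rem_cons, dif_pos hS]
      have hm : favorite (P a) S hS ∈ S := @Finset.max'_mem ι (P a) S hS
      have hc : (S.erase (favorite (P a) S hS)).card = S.card - 1 :=
        Finset.card_erase_of_mem hm
      have hlen : t.length ≤ (S.erase (favorite (P a) S hS)).card := by
        rw [hc]; simp [List.length_cons] at h; omega
      rw [ih hlen, hc]
      simp [List.length_cons]; omega

lemma rem_append (π₁ π₂ : List (Fin n)) (S : Finset ι) :
    rem P (π₁ ++ π₂) S = rem P π₂ (rem P π₁ S) := by
  induction π₁ generalizing S with
  | nil => rfl
  | cons a t ih =>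
      by_cases hS : S.Nonempty
      · rw [List.cons_append, rem_cons, rem_cons, dif_pos hS, dif_pos hS, ih]
      · have hSe : S = ∅ := Finset.not_nonempty_iff_eq_empty.1 hS
        subst hSe
        rw [rem_empty, rem_empty, rem_empty]

lemma seqAlloc_append (π₁ π₂ : List (Fin n)) (S : Finset ι) :
    seqAlloc P (π₁ ++ π₂) S = seqAlloc P π₁ S ++ seqAlloc P π₂ (rem P π₁ S) := by
  induction π₁ generalizing S with
  | nil => rfl
  | cons a t ih =>
      by_cases hS : S.Nonempty
      · rw [List.cons_append, seqAlloc_cons, seqAlloc_cons, dif_pos hS, dif_pos hS,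
          rem_cons, dif_pos hS, ih, List.cons_append]
      · have hSe : S = ∅ := Finset.not_nonempty_iff_eq_empty.1 hS
        subst hSe
        rw [seqAlloc_empty, seqAlloc_empty, rem_empty, seqAlloc_empty]
        rfl

end SeqAux
namespace SeqAux

variable {n : ℕ} {ι : Type} [DecidableEq ι] (P : Fin n → LinearOrder ι)

lemma card_pickedBy (π : List (Fin n)) (S : Finset ι) (h : π.length ≤ S.card) (a : Fin n) :
    (S.filter (fun x => (a, x) ∈ seqAlloc P π S)).card = π.count a := by
  induction π generalizing S with
  | nil =>
      simp [seqAlloc]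
  | cons a' t ih =>
      have hS : S.Nonempty := by
        rw [← Finset.card_pos]; simp [List.length_cons] at h; omega
      set p := favorite (P a') S hS with hp
      have hpS : p ∈ S := @Finset.max'_mem ι (P a') S hS
      have hlen : t.length ≤ (S.erase p).card := by
        rw [Finset.card_erase_of_mem hpS]; simp [List.length_cons] at h; omega
      have hrun : seqAlloc P (a' :: t) S = (a', p) :: seqAlloc P t (S.erase p) := by
        rw [seqAlloc_cons, dif_pos hS]
      by_cases ha : a = a'
      · subst ha
        have hset : S.filter (fun x => (a, x) ∈ seqAlloc P (a :: t) S)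
            = insert p ((S.erase p).filter (fun x => (a, x) ∈ seqAlloc P t (S.erase p))) := by
          ext x
          simp only [Finset.mem_filter, Finset.mem_insert, hrun, List.mem_cons]
          constructor
          · rintro ⟨hxS, h1 | hmem⟩
            · injection h1 with _ hxp
              exact Or.inl hxp
            · exact Or.inr ⟨(mem_seqAlloc_snd P hmem).1, hmem⟩
          · rintro (hxp | ⟨hx1, hmem⟩)
            · exact ⟨hxp ▸ hpS, Or.inl (by rw [hxp])⟩
            · exact ⟨Finset.mem_of_mem_erase hx1, Or.inr hmem⟩
        rw [hset, Finset.card_insert_of_notMem, ih _ hlen]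
        · simp [List.count_cons]
        · intro hc
          exact (Finset.notMem_erase p S) (Finset.mem_filter.1 hc).1
      · have hset : S.filter (fun x => (a, x) ∈ seqAlloc P (a' :: t) S)
            = (S.erase p).filter (fun x => (a, x) ∈ seqAlloc P t (S.erase p)) := by
          ext x
          simp only [Finset.mem_filter, hrun, List.mem_cons]
          constructor
          · rintro ⟨hxS, h1 | hmem⟩
            · injection h1 with hba _
              exact absurd hba ha
            · exact ⟨(mem_seqAlloc_snd P hmem).1, hmem⟩
          · rintro ⟨hx, hmem⟩
            exact ⟨Finset.mem_of_mem_erase hx, Or.inr hmem⟩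
        rw [hset, ih _ hlen, List.count_cons_of_ne (Ne.symm ha)]

lemma rem_replicate (a : Fin n) (j : ℕ) (S : Finset ι) :
    rem P (List.replicate j a) S
      = S.filter (fun x => j ≤ (S.filter (fun y => (P a).lt x y)).card) := by
  induction j generalizing S with
  | zero =>
      simp only [List.replicate, rem]
      exact (Finset.filter_true_of_mem (fun x _ => Nat.zero_le _)).symm
  | succ j ih =>
      by_cases hS : S.Nonempty
      · rw [List.replicate_succ, rem_cons, dif_pos hS, ih]
        set m := favorite (P a) S hS with hm
        have hmS : m ∈ S := @Finset.max'_mem ι (P a) S hS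
        ext x
        simp only [Finset.mem_filter, Finset.mem_erase]
        constructor
        · rintro ⟨⟨hxm, hxS⟩, hcard⟩
          refine ⟨hxS, ?_⟩
          have hsub : (S.erase m).filter (fun y => (P a).lt x y)
              = ((S.filter (fun y => (P a).lt x y)).erase m) := by
            ext y
            simp only [Finset.mem_filter, Finset.mem_erase]
            tauto
          have hmf : m ∈ S.filter (fun y => (P a).lt x y) := by
            refine Finset.mem_filter.2 ⟨hmS, ?_⟩
            have hle : (P a).le x m := @Finset.le_max' ι (P a) S x hxS
            exact @lt_of_le_of_ne ι (P a).toPartialOrder _ _ hle hxm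
          rw [hsub, Finset.card_erase_of_mem hmf] at hcard
          have hpos : 0 < (S.filter (fun y => (P a).lt x y)).card := Finset.card_pos.2 ⟨m, hmf⟩
          omega
        · rintro ⟨hxS, hcard⟩
          have hxm : x ≠ m := by
            intro hc
            have hempty : (S.filter (fun y => (P a).lt x y)) = ∅ := by
              refine Finset.filter_eq_empty_iff.2 (fun {y} hy => ?_)
              have hle : (P a).le y m := @Finset.le_max' ι (P a) S y hy
              rw [hc]
              exact @not_lt_of_ge ι (P a).toPreorder _ _ hle
            rw [hempty] at hcard; simp at hcard
          refine ⟨⟨hxm, hxS⟩, ?_⟩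
          have hsub : (S.erase m).filter (fun y => (P a).lt x y)
              = ((S.filter (fun y => (P a).lt x y)).erase m) := by
            ext y
            simp only [Finset.mem_filter, Finset.mem_erase]
            tauto
          have hmf : m ∈ S.filter (fun y => (P a).lt x y) := by
            refine Finset.mem_filter.2 ⟨hmS, ?_⟩
            have hle : (P a).le x m := @Finset.le_max' ι (P a) S x hxS
            exact @lt_of_le_of_ne ι (P a).toPartialOrder _ _ hle hxm
          rw [hsub, Finset.card_erase_of_mem hmf]
          omega
      · have hSe : S = ∅ := Finset.not_nonempty_iff_eq_empty.1 hS
        subst hSe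
        rw [rem_empty]
        simp

end SeqAux
namespace SeqAux

variable {n : ℕ} {ι : Type} [DecidableEq ι]

lemma count_filter_ne (π : List (Fin n)) (a1 a : Fin n) (ha : a ≠ a1) :
    (π.filter (fun x => x ≠ a1)).count a = π.count a := by
  induction π with
  | nil => rfl
  | cons b t ih =>
      by_cases hb : b = a1
      · subst hb
        rw [List.filter_cons_of_neg (by simp), List.count_cons_of_ne (by exact fun h => ha h.symm) , ih]
      · rw [List.filter_cons_of_pos (by simp [hb])]
        by_cases hab : a = b
        · subst hab
          rw [List.count_cons_self, List.count_cons_self, ih]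
        · rw [List.count_cons_of_ne (Ne.symm hab), List.count_cons_of_ne (Ne.symm hab), ih]

lemma not_mem_filter_ne (π : List (Fin n)) (a1 : Fin n) :
    a1 ∉ π.filter (fun x => x ≠ a1) := by
  intro h
  have := List.of_mem_filter h
  simp at this

lemma length_eq_sum_count [Fintype (Fin n)] (π : List (Fin n)) :
    π.length = ∑ a ∈ Finset.univ, π.count a := by
  classical
  have h1 : ∑ a ∈ (π : Multiset (Fin n)).toFinset, (π : Multiset (Fin n)).count a
      = Multiset.card (π : Multiset (Fin n)) := Multiset.toFinset_sum_count_eq _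
  have h2 : ∑ a ∈ Finset.univ, (π : Multiset (Fin n)).count a
      = ∑ a ∈ (π : Multiset (Fin n)).toFinset, (π : Multiset (Fin n)).count a := by
    refine (Finset.sum_subset (Finset.subset_univ _) ?_).symm
    intro a _ ha
    exact Multiset.count_eq_zero_of_notMem (by simpa using ha)
  have h3 : ∀ a, (π : Multiset (Fin n)).count a = π.count a := fun a => Multiset.coe_count a π
  calc π.length = Multiset.card (π : Multiset (Fin n)) := (Multiset.coe_card π).symm
    _ = ∑ a ∈ Finset.univ, (π : Multiset (Fin n)).count a := by rw [h2, h1]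
    _ = ∑ a ∈ Finset.univ, π.count a := by simp [h3]

variable [Fintype ι] (P : Fin n → LinearOrder ι)

lemma topItems_eq_gt (a1 : Fin n) (o : ι) (j : ℕ)
    (hj : (Finset.univ.filter (fun y => (P a1).lt o y)).card = j) :
    topItems P j a1 = Finset.univ.filter (fun x => (P a1).lt o x) := by
  ext x
  simp only [topItems, Finset.mem_filter, Finset.mem_univ, true_and]
  constructor
  · intro hlt
    rcases @lt_trichotomy ι (P a1) x o with h | h | h
    · exfalso
      have hsub : insert o (Finset.univ.filter (fun y => (P a1).lt o y))
          ⊆ Finset.univ.filter (fun y => (P a1).lt x y) := by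
        intro y hy
        rcases Finset.mem_insert.1 hy with hy | hy
        · subst hy; exact Finset.mem_filter.2 ⟨Finset.mem_univ _, h⟩
        · exact Finset.mem_filter.2 ⟨Finset.mem_univ _,
            @lt_trans ι (P a1).toPreorder _ _ _ h (Finset.mem_filter.1 hy).2⟩
      have hcard := Finset.card_le_card hsub
      rw [Finset.card_insert_of_notMem (fun hc => @lt_irrefl ι (P a1).toPreorder o
        (Finset.mem_filter.1 hc).2), hj] at hcard
      omega
    · subst h; rw [hj] at hlt; omega
    · exact h
  · intro h
    have hsub : Finset.univ.filter (fun y => (P a1).lt x y)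
        ⊆ (Finset.univ.filter (fun y => (P a1).lt o y)).erase x := by
      intro y hy
      have hxy := (Finset.mem_filter.1 hy).2
      refine Finset.mem_erase.2 ⟨fun hc => @lt_irrefl ι (P a1).toPreorder x (hc ▸ hxy), ?_⟩
      exact Finset.mem_filter.2 ⟨Finset.mem_univ _, @lt_trans ι (P a1).toPreorder _ _ _ h hxy⟩
    have hx : x ∈ Finset.univ.filter (fun y => (P a1).lt o y) :=
      Finset.mem_filter.2 ⟨Finset.mem_univ _, h⟩
    have hcard := Finset.card_le_card hsub
    rw [Finset.card_erase_of_mem hx, hj] at hcard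
    have hpos : 0 < j := hj ▸ Finset.card_pos.2 ⟨x, hx⟩
    omega

lemma not_mem_topItems (a1 : Fin n) (o : ι) (j : ℕ)
    (hj : (Finset.univ.filter (fun y => (P a1).lt o y)).card = j) :
    o ∉ topItems P j a1 := by
  rw [topItems_eq_gt P a1 o j hj]
  intro h
  exact @lt_irrefl ι (P a1).toPreorder o (Finset.mem_filter.1 h).2

lemma card_topItems (a1 : Fin n) (o : ι) (j : ℕ)
    (hj : (Finset.univ.filter (fun y => (P a1).lt o y)).card = j) :
    (topItems P j a1).card = j := by
  rw [topItems_eq_gt P a1 o j hj, hj]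

lemma sdiff_topItems (a1 : Fin n) (j : ℕ) :
    Finset.univ \ topItems P j a1
      = Finset.univ.filter (fun x => j ≤ (Finset.univ.filter (fun y => (P a1).lt x y)).card) := by
  ext x
  simp only [Finset.mem_sdiff, Finset.mem_filter, Finset.mem_univ, true_and, topItems]
  omega

lemma rem_replicate_univ (a1 : Fin n) (j : ℕ) :
    rem P (List.replicate j a1) (Finset.univ : Finset ι) = Finset.univ \ topItems P j a1 := by
  rw [rem_replicate, sdiff_topItems]

end SeqAux
namespace SeqAux

variable {n : ℕ} {ι : Type} [DecidableEq ι] (P : Fin n → LinearOrder ι)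

/-- If `o` is picked (necessarily by a non-`a1` agent) when running `π` from `S`,
then it is also picked by a non-`a1` agent when running `π` with `a1`'s turns removed
from any subset `T ⊆ S` containing `o` and no item that `a1` prefers to `o`. -/
lemma compare_run (a1 : Fin n) (o : ι) :
    ∀ (π : List (Fin n)) (S T : Finset ι), T ⊆ S →
      (∀ x ∈ T, ¬ (P a1).lt o x) → o ∈ T →
      (∀ b, (b, o) ∈ seqAlloc P π S → b ≠ a1) →
      (∃ b, (b, o) ∈ seqAlloc P π S) →
      ∃ b, b ≠ a1 ∧ (b, o) ∈ seqAlloc P (π.filter (fun x => x ≠ a1)) T := by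
  intro π
  induction π with
  | nil =>
      intro S T _ _ _ _ hex
      obtain ⟨b, hb⟩ := hex
      simp [seqAlloc] at hb
  | cons a t ih =>
      intro S T hTS hT hoT hne hex
      have hoS : o ∈ S := hTS hoT
      have hS : S.Nonempty := ⟨o, hoS⟩
      have hTne : T.Nonempty := ⟨o, hoT⟩
      set p := favorite (P a) S hS with hp
      have hrun : seqAlloc P (a :: t) S = (a, p) :: seqAlloc P t (S.erase p) := by
        rw [seqAlloc_cons, dif_pos hS]
      by_cases ha : a = a1
      · subst ha
        -- a1's turn in the big run; skipped in the small run
        have hpo : p ≠ o := by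
          intro hc
          exact hne a (by rw [hrun, hc]; exact List.mem_cons_self) rfl
        have hpT : p ∉ T := by
          intro hc
          have hle : (P a).le o p := @Finset.le_max' ι (P a) S o hoS
          have hlt : (P a).lt o p :=
            @lt_of_le_of_ne ι (P a).toPartialOrder _ _ hle (fun h => hpo h.symm)
          exact hT p hc hlt
        have hTS' : T ⊆ S.erase p := fun x hx =>
          Finset.mem_erase.2 ⟨fun hc => hpT (hc ▸ hx), hTS hx⟩
        have hne' : ∀ b, (b, o) ∈ seqAlloc P t (S.erase p) → b ≠ a := fun b hb =>
          hne b (by rw [hrun]; exact List.mem_cons_of_mem _ hb)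
        have hex' : ∃ b, (b, o) ∈ seqAlloc P t (S.erase p) := by
          obtain ⟨b, hb⟩ := hex
          rw [hrun] at hb
          rcases List.mem_cons.1 hb with h1 | h1
          · injection h1 with _ hsnd; exact absurd hsnd.symm hpo
          · exact ⟨b, h1⟩
        have hfilter : (a :: t).filter (fun x => x ≠ a) = t.filter (fun x => x ≠ a) := by
          rw [List.filter_cons_of_neg]; simp
        rw [hfilter]
        exact ih (S.erase p) T hTS' hT hoT hne' hex'
      · -- another agent's turn
        set q := favorite (P a) T hTne with hq
        have hfilter : (a :: t).filter (fun x => x ≠ a1)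
            = a :: t.filter (fun x => x ≠ a1) := by
          rw [List.filter_cons_of_pos]; simp [ha]
        have hrunT : seqAlloc P (a :: t.filter (fun x => x ≠ a1)) T
            = (a, q) :: seqAlloc P (t.filter (fun x => x ≠ a1)) (T.erase q) := by
          rw [seqAlloc_cons, dif_pos hTne]
        by_cases hqo : q = o
        · refine ⟨a, ha, ?_⟩
          rw [hfilter, hrunT, hqo]
          exact List.mem_cons_self
        · -- q ≠ o; then also p ≠ o, recurse with S.erase p, T.erase q
          have hpo : p ≠ o := by
            intro hc
            -- then max of T is also o
            apply hqo
            have h1 : (P a).le q p := @Finset.le_max' ι (P a) S q (hTS (@Finset.max'_mem ι (P a) T hTne))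
            have h2 : (P a).le o q := @Finset.le_max' ι (P a) T o hoT
            rw [hc] at h1
            exact @le_antisymm ι (P a).toPartialOrder _ _ h1 h2
          have hqT : q ∈ T := @Finset.max'_mem ι (P a) T hTne
          have hTS' : T.erase q ⊆ S.erase p := by
            intro x hx
            obtain ⟨hxq, hxT⟩ := Finset.mem_erase.1 hx
            refine Finset.mem_erase.2 ⟨?_, hTS hxT⟩
            intro hc
            -- x = p ∈ T, so p ≤ q, but q ≤ p, so p = q, so x = q
            apply hxq
            have h1 : (P a).le p q := by
              rw [← hc] at *
              exact @Finset.le_max' ι (P a) T x hxT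
            have h2 : (P a).le q p := @Finset.le_max' ι (P a) S q (hTS hqT)
            rw [hc]
            exact @le_antisymm ι (P a).toPartialOrder _ _ h1 h2
          have hT' : ∀ x ∈ T.erase q, ¬ (P a1).lt o x := fun x hx =>
            hT x (Finset.mem_of_mem_erase hx)
          have hoT' : o ∈ T.erase q := Finset.mem_erase.2 ⟨fun hc => hqo hc.symm, hoT⟩
          have hne' : ∀ b, (b, o) ∈ seqAlloc P t (S.erase p) → b ≠ a1 := fun b hb =>
            hne b (by rw [hrun]; exact List.mem_cons_of_mem _ hb)
          have hex' : ∃ b, (b, o) ∈ seqAlloc P t (S.erase p) := by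
            obtain ⟨b, hb⟩ := hex
            rw [hrun] at hb
            rcases List.mem_cons.1 hb with h1 | h1
            · injection h1 with _ hsnd; exact absurd hsnd.symm hpo
            · exact ⟨b, h1⟩
          obtain ⟨b, hb1, hb2⟩ := ih (S.erase p) (T.erase q) hTS' hT' hoT' hne' hex'
          refine ⟨b, hb1, ?_⟩
          rw [hfilter, hrunT]
          exact List.mem_cons_of_mem _ hb2
end SeqAux
namespace SeqAux

variable {n : ℕ} {ι : Type} [DecidableEq ι] [Fintype ι] (P : Fin n → LinearOrder ι)

lemma w_strict_mono (a : Fin n) {x y : ι} (h : (P a).lt y x) :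
    (Finset.univ.filter (fun z => (P a).lt z y)).card
      < (Finset.univ.filter (fun z => (P a).lt z x)).card := by
  have hsub : Finset.univ.filter (fun z => (P a).lt z y)
      ⊆ Finset.univ.filter (fun z => (P a).lt z x) := by
    intro z hz
    exact Finset.mem_filter.2 ⟨Finset.mem_univ _,
      @lt_trans ι (P a).toPreorder _ _ _ (Finset.mem_filter.1 hz).2 h⟩
  refine Finset.card_lt_card ((Finset.ssubset_iff_of_subset hsub).2 ⟨y, ?_, ?_⟩)
  · exact Finset.mem_filter.2 ⟨Finset.mem_univ _, h⟩
  · intro hc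
    exact @lt_irrefl ι (P a).toPreorder y (Finset.mem_filter.1 hc).2

/-- Key exchange lemma: among assignments that are valid (each assigned item is preferred
by its owner to everything in `I'`, no item assigned to `a1`) and have prescribed
per-agent counts, there is one in which some agent owns her favorite remaining item. -/
lemma exists_own_max (a1 : Fin n) (I' R : Finset ι) (h : ι → Fin n)
    (hsub : I' ⊆ R) (hD : (R \ I').Nonempty)
    (h1 : ∀ x ∈ R \ I', h x ≠ a1)
    (h2 : ∀ x ∈ R \ I', ∀ y ∈ I', (P (h x)).lt y x) :
    ∃ (h' : ι → Fin n) (a : Fin n) (x : ι),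
      (∀ z ∈ R \ I', h' z ≠ a1) ∧
      (∀ z ∈ R \ I', ∀ y ∈ I', (P (h' z)).lt y z) ∧
      (∀ b, ((R \ I').filter (fun z => h' z = b)).card
          = ((R \ I').filter (fun z => h z = b)).card) ∧
      x ∈ R \ I' ∧ h' x = a ∧ (∀ y ∈ R, (P a).le y x) := by
  classical
  have hR : R.Nonempty := ⟨hD.choose, (Finset.mem_sdiff.1 hD.choose_spec).1⟩
  set w : Fin n → ι → ℕ := fun a x => (Finset.univ.filter (fun z => (P a).lt z x)).card with hw
  set Φ : (ι → Fin n) → ℕ := fun f => ∑ x ∈ R \ I', w (f x) x with hΦ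
  set V : Finset (ι → Fin n) := Finset.univ.filter (fun f =>
    (∀ z ∈ R \ I', f z ≠ a1) ∧ (∀ z ∈ R \ I', ∀ y ∈ I', (P (f z)).lt y z) ∧
    (∀ b, ((R \ I').filter (fun z => f z = b)).card
        = ((R \ I').filter (fun z => h z = b)).card)) with hV
  have hhV : h ∈ V := Finset.mem_filter.2 ⟨Finset.mem_univ _, h1, h2, fun _ => rfl⟩
  obtain ⟨g, hgV, hgmax⟩ := Finset.exists_max_image V Φ ⟨h, hhV⟩
  obtain ⟨-, hg1, hg2, hg3⟩ := Finset.mem_filter.1 hgV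
  by_cases hfound : ∃ x ∈ R \ I', ∀ y ∈ R, (P (g x)).le y x
  · obtain ⟨x, hx, hxmax⟩ := hfound
    exact ⟨g, g x, x, hg1, hg2, hg3, hx, rfl, hxmax⟩
  exfalso
  -- favorite item of each agent among R
  set f : Fin n → ι := fun b => favorite (P b) R hR with hf
  have hfmem : ∀ b, f b ∈ R := fun b => @Finset.max'_mem ι (P b) R hR
  have hfmax : ∀ b, ∀ y ∈ R, (P b).le y (f b) := fun b y hy => @Finset.le_max' ι (P b) R y hy
  set Act : Fin n → Prop := fun b => ((R \ I').filter (fun z => g z = b)).Nonempty with hAct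
  have key1 : ∀ b, Act b → f b ∈ R \ I' := by
    intro b hb
    obtain ⟨z, hz⟩ := hb
    obtain ⟨hzRD, hzb⟩ := Finset.mem_filter.1 hz
    refine Finset.mem_sdiff.2 ⟨hfmem b, fun hfb => ?_⟩
    have hlt : (P b).lt (f b) z := by
      have := hg2 z hzRD (f b) hfb
      rwa [hzb] at this
    have hle : (P b).le z (f b) := hfmax b z (Finset.mem_sdiff.1 hzRD).1
    exact @lt_irrefl ι (P b).toPreorder (f b)
      (@lt_of_lt_of_le ι (P b).toPreorder _ _ _ hlt hle)
  set φ : Fin n → Fin n := fun b => g (f b) with hφ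
  have key2 : ∀ b, Act b → Act (φ b) := by
    intro b hb
    exact ⟨f b, Finset.mem_filter.2 ⟨key1 b hb, rfl⟩⟩
  have key3 : ∀ b, Act b → φ b ≠ b := by
    intro b hb hc
    apply hfound
    refine ⟨f b, key1 b hb, ?_⟩
    intro y hy
    have : g (f b) = b := hc
    rw [this]
    exact hfmax b y hy
  -- the iterated sequence of agents
  obtain ⟨x₀, hx₀⟩ := hD
  set u : ℕ → Fin n := fun i => φ^[i] (g x₀) with hu
  have hact : ∀ i, Act (u i) := by
    intro i
    induction i with
    | zero => exact ⟨x₀, Finset.mem_filter.2 ⟨hx₀, rfl⟩⟩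
    | succ i ihi =>
        have : u (i + 1) = φ (u i) := Function.iterate_succ_apply' φ i (g x₀)
        rw [this]
        exact key2 _ ihi
  have hustep : ∀ i, u (i + 1) = φ (u i) := fun i => Function.iterate_succ_apply' φ i (g x₀)
  -- pigeonhole: some repetition within the first n+1 values
  have hpigeon : ∃ i ∈ Finset.range (n + 1), ∃ j ∈ Finset.range (n + 1), i ≠ j ∧ u i = u j := by
    refine Finset.exists_ne_map_eq_of_card_lt_of_maps_to
      (t := (Finset.univ : Finset (Fin n))) ?_ ?_
    · simp [Finset.card_range, Finset.card_univ]
    · intro i _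
      exact Finset.mem_univ (u i)
  obtain ⟨i₁, hi₁, j₁, hj₁, hij₁, huij₁⟩ := hpigeon
  have hrep : ∃ jj ∈ Finset.range (n + 1), ∃ ll, ll < jj ∧ u ll = u jj := by
    rcases lt_or_gt_of_ne hij₁ with h | h
    · exact ⟨j₁, hj₁, i₁, h, huij₁⟩
    · exact ⟨i₁, hi₁, j₁, h, huij₁.symm⟩
  set W : Finset ℕ := (Finset.range (n + 1)).filter (fun m => ∃ ll, ll < m ∧ u ll = u m)
    with hW
  have hWne : W.Nonempty := by
    obtain ⟨jj, hjj, ll, hll⟩ := hrep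
    exact ⟨jj, Finset.mem_filter.2 ⟨hjj, ll, hll⟩⟩
  set j₀ : ℕ := W.min' hWne with hj₀def
  have hj₀W : j₀ ∈ W := Finset.min'_mem _ _
  obtain ⟨hj₀r, i₀, hi₀j₀, hui₀j₀⟩ := Finset.mem_filter.1 hj₀W
  set d : ℕ := j₀ - i₀ with hd
  have hdpos : 0 < d := by omega
  set c : ℕ → Fin n := fun l => u (i₀ + l) with hc
  have hcinj : ∀ l m, l < d → m < d → c l = c m → l = m := by
    have haux : ∀ l m, l < m → m < d → c l ≠ c m := by
      intro l m hlm hmd hc'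
      have hmem : i₀ + m ∈ W := by
        refine Finset.mem_filter.2 ⟨?_, i₀ + l, by omega, hc'⟩
        simp only [Finset.mem_range] at hj₀r ⊢
        omega
      have := Finset.min'_le W _ hmem
      omega
    intro l m hl hm hc'
    rcases lt_trichotomy l m with h | h | h
    · exact absurd hc' (haux l m h hm)
    · exact h
    · exact absurd hc'.symm (haux m l h hl)
  have hccycle : ∀ l, l < d → c ((l + 1) % d) = φ (c l) := by
    intro l hl
    by_cases hld : l + 1 = d
    · have h0 : (l + 1) % d = 0 := by rw [hld, Nat.mod_self]
      rw [h0]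
      have h1 : c 0 = u j₀ := by
        show u (i₀ + 0) = u j₀
        rw [Nat.add_zero, hui₀j₀]
      have h2 : u j₀ = u (i₀ + l + 1) := by
        have : j₀ = i₀ + l + 1 := by omega
        rw [this]
      rw [h1, h2, hustep]
    · have h0 : (l + 1) % d = l + 1 := Nat.mod_eq_of_lt (by omega)
      rw [h0]
      show u (i₀ + (l + 1)) = φ (u (i₀ + l))
      have : i₀ + (l + 1) = (i₀ + l) + 1 := by omega
      rw [this, hustep]
  have hcact : ∀ l, Act (c l) := fun l => hact (i₀ + l)
  have hd2 : 2 ≤ d := by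
    rcases Nat.lt_or_ge d 2 with h | h
    · exfalso
      have hd1 : d = 1 := by omega
      have := hccycle 0 (by omega)
      rw [hd1] at this
      simp at this
      exact key3 (c 0) (hcact 0) this.symm
    · exact h
  -- the cycle of items
  set e : ℕ → ι := fun l => f (c l) with he
  have heRD : ∀ l, e l ∈ R \ I' := fun l => key1 _ (hcact l)
  have hge : ∀ l, l < d → g (e l) = c ((l + 1) % d) := by
    intro l hl
    rw [hccycle l hl]
  have heinj : ∀ l m, l < d → m < d → e l = e m → l = m := by
    intro l m hl hm helm
    have h1 : c ((l + 1) % d) = c ((m + 1) % d) := by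
      rw [← hge l hl, ← hge m hm, helm]
    have h2 : (l + 1) % d = (m + 1) % d :=
      hcinj _ _ (Nat.mod_lt _ hdpos) (Nat.mod_lt _ hdpos) h1
    by_cases hld : l + 1 = d <;> by_cases hmd : m + 1 = d
    · omega
    · rw [hld, Nat.mod_self, Nat.mod_eq_of_lt (by omega : m + 1 < d)] at h2; omega
    · rw [hmd, Nat.mod_self, Nat.mod_eq_of_lt (by omega : l + 1 < d)] at h2; omega
    · rw [Nat.mod_eq_of_lt (by omega : l + 1 < d), Nat.mod_eq_of_lt (by omega : m + 1 < d)] at h2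
      omega
  set eSet : Finset ι := (Finset.range d).image e with heSet
  have hesub : eSet ⊆ R \ I' := by
    intro x hx
    obtain ⟨l, -, rfl⟩ := Finset.mem_image.1 hx
    exact heRD l
  -- the improved assignment
  set g' : ι → Fin n := fun x =>
    if hx : ∃ l, l < d ∧ e l = x then c (Nat.find hx) else g x with hg'
  have hg'on : ∀ l, l < d → g' (e l) = c l := by
    intro l hl
    have hx : ∃ l', l' < d ∧ e l' = e l := ⟨l, hl, rfl⟩
    have := Nat.find_spec hx
    have hfind : Nat.find hx = l := heinj _ _ this.1 hl this.2
    simp only [hg', dif_pos hx, hfind]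
  have hg'off : ∀ x, x ∉ eSet → g' x = g x := by
    intro x hx
    have : ¬ ∃ l, l < d ∧ e l = x := by
      rintro ⟨l, hl, rfl⟩
      exact hx (Finset.mem_image.2 ⟨l, Finset.mem_range.2 hl, rfl⟩)
    simp only [hg', dif_neg this]
  -- modular arithmetic helpers
  have hmod1 : ∀ l, l < d → ((l + 1) % d + (d - 1)) % d = l := by
    intro l hl
    by_cases hld : l + 1 = d
    · rw [hld, Nat.mod_self]
      have h1 : 0 + (d - 1) = d - 1 := by omega
      rw [h1, Nat.mod_eq_of_lt (by omega)]
      omega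
    · rw [Nat.mod_eq_of_lt (by omega : l + 1 < d)]
      have h1 : l + 1 + (d - 1) = l + d := by omega
      rw [h1, Nat.add_mod_right, Nat.mod_eq_of_lt hl]
  have hmod2 : ∀ m, m < d → ((m + (d - 1)) % d + 1) % d = m := by
    intro m hm
    by_cases hm0 : m = 0
    · subst hm0
      rw [Nat.zero_add, Nat.mod_eq_of_lt (by omega : d - 1 < d)]
      have h1 : d - 1 + 1 = d := by omega
      rw [h1, Nat.mod_self]
    · have h1 : m + (d - 1) = (m - 1) + d := by omega
      rw [h1, Nat.add_mod_right, Nat.mod_eq_of_lt (by omega : m - 1 < d)]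
      have h2 : m - 1 + 1 = m := by omega
      rw [h2, Nat.mod_eq_of_lt hm]
  have hmod4 : ∀ m, m < d → (m + (d - 1)) % d ≠ m := by
    intro m hm hc
    by_cases hm0 : m = 0
    · subst hm0
      rw [Nat.zero_add, Nat.mod_eq_of_lt (by omega : d - 1 < d)] at hc
      omega
    · have h1 : m + (d - 1) = (m - 1) + d := by omega
      rw [h1, Nat.add_mod_right, Nat.mod_eq_of_lt (by omega : m - 1 < d)] at hc
      omega
  have hcyc : ∀ F : ℕ → ℕ,
      ∑ l ∈ Finset.range d, F ((l + 1) % d) = ∑ m ∈ Finset.range d, F m := by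
    intro F
    refine Finset.sum_nbij' (i := fun l => (l + 1) % d) (j := fun m => (m + (d - 1)) % d)
      ?_ ?_ ?_ ?_ ?_
    · intro l hl
      exact Finset.mem_range.2 (Nat.mod_lt _ hdpos)
    · intro m hm
      exact Finset.mem_range.2 (Nat.mod_lt _ hdpos)
    · intro l hl
      exact hmod1 l (Finset.mem_range.1 hl)
    · intro m hm
      exact hmod2 m (Finset.mem_range.1 hm)
    · intro l hl
      rfl
  have heinj' : ∀ x ∈ Finset.range d, ∀ y ∈ Finset.range d, e x = e y → x = y := by
    intro x hx y hy hxy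
    exact heinj x y (Finset.mem_range.1 hx) (Finset.mem_range.1 hy) hxy
  -- g' is valid
  have hg'1 : ∀ z ∈ R \ I', g' z ≠ a1 := by
    intro z hz
    by_cases hze : z ∈ eSet
    · obtain ⟨l, hl, rfl⟩ := Finset.mem_image.1 hze
      rw [hg'on l (Finset.mem_range.1 hl)]
      obtain ⟨zz, hzz⟩ := hcact l
      obtain ⟨hzz1, hzz2⟩ := Finset.mem_filter.1 hzz
      rw [← hzz2]
      exact hg1 zz hzz1
    · rw [hg'off z hze]
      exact hg1 z hz
  have hg'2 : ∀ z ∈ R \ I', ∀ y ∈ I', (P (g' z)).lt y z := by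
    intro z hz y hy
    by_cases hze : z ∈ eSet
    · obtain ⟨l, hl, rfl⟩ := Finset.mem_image.1 hze
      rw [hg'on l (Finset.mem_range.1 hl)]
      have hle : (P (c l)).le y (e l) := hfmax (c l) y (hsub hy)
      have hne : y ≠ e l := by
        intro hc
        exact (Finset.mem_sdiff.1 (heRD l)).2 (hc ▸ hy)
      exact @lt_of_le_of_ne ι (P (c l)).toPartialOrder _ _ hle hne
    · rw [hg'off z hze]
      exact hg2 z hz y hy
  -- counts are preserved
  have hcount : ∀ b, ((R \ I').filter (fun z => g' z = b)).card
      = ((R \ I').filter (fun z => g z = b)).card := by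
    intro b
    rw [Finset.card_filter, Finset.card_filter, ← Finset.sum_sdiff hesub,
      ← Finset.sum_sdiff hesub]
    congr 1
    · exact Finset.sum_congr rfl (fun x hx => by
        rw [hg'off x (Finset.mem_sdiff.1 hx).2])
    · rw [Finset.sum_image heinj', Finset.sum_image heinj']
      have hLHS : ∑ l ∈ Finset.range d, (if g' (e l) = b then 1 else 0)
          = ∑ l ∈ Finset.range d, (if c l = b then 1 else 0) :=
        Finset.sum_congr rfl (fun l hl => by rw [hg'on l (Finset.mem_range.1 hl)])
      have hRHS : ∑ l ∈ Finset.range d, (if g (e l) = b then 1 else 0)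
          = ∑ l ∈ Finset.range d, (if c ((l + 1) % d) = b then 1 else 0) :=
        Finset.sum_congr rfl (fun l hl => by rw [hge l (Finset.mem_range.1 hl)])
      rw [hLHS, hRHS, hcyc (fun m => if c m = b then 1 else 0)]
  -- the potential strictly increases
  have hsum1 : ∑ x ∈ eSet, w (g' x) x = ∑ l ∈ Finset.range d, w (c l) (e l) := by
    rw [Finset.sum_image heinj']
    exact Finset.sum_congr rfl (fun l hl => by rw [hg'on l (Finset.mem_range.1 hl)])
  have hsum2 : ∑ x ∈ eSet, w (g x) x
      = ∑ l ∈ Finset.range d, w (c ((l + 1) % d)) (e l) := by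
    rw [Finset.sum_image heinj']
    exact Finset.sum_congr rfl (fun l hl => by rw [hge l (Finset.mem_range.1 hl)])
  have hshift : ∑ l ∈ Finset.range d, w (c ((l + 1) % d)) (e l)
      = ∑ m ∈ Finset.range d, w (c m) (e ((m + (d - 1)) % d)) := by
    rw [← hcyc (fun m => w (c m) (e ((m + (d - 1)) % d)))]
    refine Finset.sum_congr rfl (fun l hl => ?_)
    rw [hmod1 l (Finset.mem_range.1 hl)]
  have hstrict : ∑ m ∈ Finset.range d, w (c m) (e ((m + (d - 1)) % d))
      < ∑ m ∈ Finset.range d, w (c m) (e m) := by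
    refine Finset.sum_lt_sum_of_nonempty ⟨0, Finset.mem_range.2 (by omega)⟩ ?_
    intro m hm
    have hmd : m < d := Finset.mem_range.1 hm
    have hm'd : (m + (d - 1)) % d < d := Nat.mod_lt _ hdpos
    have hne : e ((m + (d - 1)) % d) ≠ e m := by
      intro hc
      exact hmod4 m hmd (heinj _ _ hm'd hmd hc)
    have hle : (P (c m)).le (e ((m + (d - 1)) % d)) (e m) :=
      hfmax (c m) _ (Finset.mem_sdiff.1 (heRD _)).1
    exact w_strict_mono P (c m) (@lt_of_le_of_ne ι (P (c m)).toPartialOrder _ _ hle hne)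
  have hΦlt : Φ g < Φ g' := by
    have e1 : Φ g' = (∑ x ∈ (R \ I') \ eSet, w (g x) x)
        + ∑ l ∈ Finset.range d, w (c l) (e l) := by
      rw [hΦ]
      simp only
      rw [← Finset.sum_sdiff hesub, hsum1]
      congr 1
      exact Finset.sum_congr rfl (fun x hx => by rw [hg'off x (Finset.mem_sdiff.1 hx).2])
    have e2 : Φ g = (∑ x ∈ (R \ I') \ eSet, w (g x) x)
        + ∑ m ∈ Finset.range d, w (c m) (e ((m + (d - 1)) % d)) := by
      rw [hΦ]
      simp only
      rw [← Finset.sum_sdiff hesub, hsum2, hshift]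
    rw [e1, e2]
    omega
  have hg'V : g' ∈ V := Finset.mem_filter.2 ⟨Finset.mem_univ _, hg'1, hg'2,
    fun b => (hcount b).trans (hg3 b)⟩
  have := hgmax g' hg'V
  omega

end SeqAux
namespace SeqAux

variable {n : ℕ} {ι : Type} [DecidableEq ι] [Fintype ι] (P : Fin n → LinearOrder ι)

lemma build_tau (a1 : Fin n) (I' : Finset ι) :
    ∀ (N : ℕ) (R : Finset ι) (h : ι → Fin n), (R \ I').card ≤ N → I' ⊆ R →
      (∀ x ∈ R \ I', h x ≠ a1) →
      (∀ x ∈ R \ I', ∀ y ∈ I', (P (h x)).lt y x) →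
      ∃ τ : List (Fin n),
        (∀ a, τ.count a = ((R \ I').filter (fun z => h z = a)).card) ∧
        rem P τ R = I' := by
  intro N
  induction N with
  | zero =>
      intro R h hcard hsub h1 h2
      have hempty : R \ I' = ∅ := Finset.card_eq_zero.1 (by omega)
      have hRI : R = I' := by
        apply Finset.Subset.antisymm _ hsub
        intro x hx
        by_contra hc
        have : x ∈ R \ I' := Finset.mem_sdiff.2 ⟨hx, hc⟩
        rw [hempty] at this
        exact absurd this (Finset.notMem_empty x)
      exact ⟨[], fun a => by rw [hempty]; simp, by rw [← hRI]; rfl⟩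
  | succ N ih =>
      intro R h hcard hsub h1 h2
      rcases (R \ I').eq_empty_or_nonempty with hempty | hD
      · have hRI : R = I' := by
          apply Finset.Subset.antisymm _ hsub
          intro x hx
          by_contra hc
          have : x ∈ R \ I' := Finset.mem_sdiff.2 ⟨hx, hc⟩
          rw [hempty] at this
          exact absurd this (Finset.notMem_empty x)
        exact ⟨[], fun a => by rw [hempty]; simp, by rw [← hRI]; rfl⟩
      · obtain ⟨g', a, x, hg'1, hg'2, hg'count, hxRD, hg'x, hxmax⟩ :=
          exists_own_max P a1 I' R h hsub hD h1 h2
        obtain ⟨hxR, hxI⟩ := Finset.mem_sdiff.1 hxRD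
        have hRne : R.Nonempty := ⟨x, hxR⟩
        set R' : Finset ι := R.erase x with hR'
        have hsubdiff : R' \ I' = (R \ I').erase x := by
          ext z
          simp only [hR', Finset.mem_sdiff, Finset.mem_erase]
          tauto
        have hsub' : I' ⊆ R' := fun y hy =>
          Finset.mem_erase.2 ⟨fun hc => hxI (hc ▸ hy), hsub hy⟩
        have hcard' : (R' \ I').card ≤ N := by
          rw [hsubdiff, Finset.card_erase_of_mem hxRD]
          have : 0 < (R \ I').card := Finset.card_pos.2 hD
          omega
        have hmono : ∀ z ∈ R' \ I', z ∈ R \ I' := by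
          intro z hz
          rw [hsubdiff] at hz
          exact Finset.mem_of_mem_erase hz
        obtain ⟨τ', hτcount, hτrem⟩ := ih R' g' hcard' hsub'
          (fun z hz => hg'1 z (hmono z hz)) (fun z hz => hg'2 z (hmono z hz))
        have hfav : favorite (P a) R hRne = x := by
          refine @le_antisymm ι (P a).toPartialOrder _ _ ?_ ?_
          · exact @Finset.max'_le ι (P a) R hRne x hxmax
          · exact @Finset.le_max' ι (P a) R x hxR
        refine ⟨a :: τ', ?_, ?_⟩
        · intro b
          have hfe : (R' \ I').filter (fun z => g' z = b)
              = ((R \ I').filter (fun z => g' z = b)).erase x := by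
            rw [hsubdiff]
            ext z
            simp only [Finset.mem_filter, Finset.mem_erase]
            tauto
          by_cases hb : b = a
          · subst hb
            rw [List.count_cons_self, hτcount b, hfe,
              Finset.card_erase_of_mem (Finset.mem_filter.2 ⟨hxRD, hg'x⟩)]
            have hpos : 0 < ((R \ I').filter (fun z => g' z = b)).card :=
              Finset.card_pos.2 ⟨x, Finset.mem_filter.2 ⟨hxRD, hg'x⟩⟩
            rw [← hg'count b]
            omega
          · rw [List.count_cons_of_ne (Ne.symm hb), hτcount b, hfe]
            have hnot : x ∉ (R \ I').filter (fun z => g' z = b) := by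
              intro hc
              have h5 := (Finset.mem_filter.1 hc).2
              rw [hg'x] at h5
              exact hb h5.symm
            rw [Finset.erase_eq_of_notMem hnot, hg'count b]
        · rw [rem_cons, dif_pos hRne, hfav]
          exact hτrem

end SeqAux

/-- If item `o` is ranked `k'`-th (`k' ≤ k`) by agent `a_1`, whose top
`k' - 1` items form `I*`, then some balanced policy denies `o` to `a_1` iff there are a
set `I' ⊆ I \ (I* ∪ {o})` with `|I'| = k - k' + 1` and an assignment of all items of
`I \ (I' ∪ I*)` to the agents other than `a_1`, giving each of them exactly `k` items,
each of which she strictly prefers to every item of `I'`. -/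
theorem necessary_item_balanced_flow
    {ι : Type} [Fintype ι] [DecidableEq ι] {n k : ℕ} (hn : 0 < n) (hk : 1 ≤ k)
    (hcard : Fintype.card ι = k * n)
    (P : Fin n → LinearOrder ι) (a1 : Fin n) (o : ι)
    (k' : ℕ) (hk'1 : 1 ≤ k') (hk'k : k' ≤ k) (hrank : rankOf P a1 o = k') :
    (∃ π : List (Fin n), BalancedPolicy k π ∧ o ∉ receives P π a1) ↔
      ∃ I' : Finset ι,
        I' ⊆ Finset.univ \ insert o (topItems P (k' - 1) a1) ∧
        I'.card = k - k' + 1 ∧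
        ∃ g : ι → Fin n,
          (∀ x ∈ Finset.univ \ (I' ∪ topItems P (k' - 1) a1), g x ≠ a1) ∧
          (∀ a : Fin n, a ≠ a1 →
            ((Finset.univ \ (I' ∪ topItems P (k' - 1) a1)).filter
              (fun x => g x = a)).card = k) ∧
          (∀ a : Fin n, a ≠ a1 → ∀ x ∈ Finset.univ \ (I' ∪ topItems P (k' - 1) a1),
            g x = a → ∀ y ∈ I', (P a).lt y x) := by
  classical
  have hogt : (Finset.univ.filter (fun y => (P a1).lt o y)).card = k' - 1 := by
    have h1 : (Finset.univ.filter (fun y => (P a1).lt o y)).card + 1 = k' := hrank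
    omega
  set Istar : Finset ι := topItems P (k' - 1) a1 with hIstar
  have hIstar_eq : Istar = Finset.univ.filter (fun x => (P a1).lt o x) :=
    SeqAux.topItems_eq_gt P a1 o (k' - 1) hogt
  have hoIstar : o ∉ Istar := SeqAux.not_mem_topItems P a1 o (k' - 1) hogt
  have hIstar_card : Istar.card = k' - 1 := SeqAux.card_topItems P a1 o (k' - 1) hogt
  set T : Finset ι := Finset.univ \ Istar with hTdef
  have hoT : o ∈ T := Finset.mem_sdiff.2 ⟨Finset.mem_univ _, hoIstar⟩
  have huniv_card : (Finset.univ : Finset ι).card = k * n := by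
    rw [Finset.card_univ, hcard]
  have hk_le : k ≤ k * n := Nat.le_mul_of_pos_right k hn
  have hTcard : T.card = k * n - (k' - 1) := by
    rw [hTdef, Finset.card_sdiff_of_subset (Finset.subset_univ _), huniv_card, hIstar_card]
  have hrem_pre : SeqAux.rem P (List.replicate (k' - 1) a1) (Finset.univ : Finset ι) = T :=
    SeqAux.rem_replicate_univ P a1 (k' - 1)
  have hT_not : ∀ x ∈ T, ¬ (P a1).lt o x := by
    intro x hx hlt
    have : x ∈ Istar := by
      rw [hIstar_eq]
      exact Finset.mem_filter.2 ⟨Finset.mem_univ _, hlt⟩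
    exact (Finset.mem_sdiff.1 hx).2 this
  constructor
  · -- forward direction
    rintro ⟨π, hbal, hrec⟩
    set τ : List (Fin n) := π.filter (fun x => x ≠ a1) with hτ
    have hπlen : π.length = k * n := by
      rw [SeqAux.length_eq_sum_count π]
      have : ∀ a : Fin n, π.count a = k := hbal
      simp only [this, Finset.sum_const, Finset.card_univ, Fintype.card_fin, smul_eq_mul]
      exact Nat.mul_comm n k
    have hrem_univ : SeqAux.rem P π (Finset.univ : Finset ι) = ∅ := by
      have h1 := SeqAux.card_rem P (π := π) (S := (Finset.univ : Finset ι))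
        (by rw [hπlen, huniv_card])
      rw [hπlen, huniv_card] at h1
      exact Finset.card_eq_zero.1 (by omega)
    have hopick : ∃ b, (b, o) ∈ seqAlloc P π Finset.univ :=
      SeqAux.exists_mem_seqAlloc P (Finset.mem_univ o)
        (by rw [hrem_univ]; exact Finset.notMem_empty o)
    have hne : ∀ b, (b, o) ∈ seqAlloc P π Finset.univ → b ≠ a1 := by
      intro b hb hba
      subst hba
      exact hrec (Finset.mem_filter.2 ⟨Finset.mem_univ _, hb⟩)
    obtain ⟨b0, hb0ne, hb0⟩ := SeqAux.compare_run P a1 o π Finset.univ T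
      Finset.sdiff_subset hT_not hoT hne hopick
    have hτcount : ∀ a, a ≠ a1 → τ.count a = k := fun a ha =>
      (SeqAux.count_filter_ne π a1 a ha).trans (hbal a)
    have hτa1 : a1 ∉ τ := SeqAux.not_mem_filter_ne π a1
    have hτlen : τ.length = (n - 1) * k := by
      rw [SeqAux.length_eq_sum_count τ]
      rw [← Finset.sum_erase_add Finset.univ _ (Finset.mem_univ a1)]
      have h1 : τ.count a1 = 0 := List.count_eq_zero.2 hτa1
      have h2 : ∀ a ∈ Finset.univ.erase a1, τ.count a = k := fun a ha =>
        hτcount a (Finset.mem_erase.1 ha).1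
      rw [Finset.sum_congr rfl h2, h1, Finset.sum_const,
        Finset.card_erase_of_mem (Finset.mem_univ a1), Finset.card_univ, Fintype.card_fin,
        smul_eq_mul, Nat.add_zero]
    have hnk : (n - 1) * k + k = k * n := by
      have h1 : (n - 1) * k + k = (n - 1 + 1) * k := (Nat.succ_mul (n - 1) k).symm
      rw [h1]
      have h2 : n - 1 + 1 = n := by omega
      rw [h2, Nat.mul_comm]
    have hlen_le : τ.length ≤ T.card := by
      rw [hτlen, hTcard]; omega
    set I'0 : Finset ι := SeqAux.rem P τ T with hI0
    have hI0card : I'0.card = k - k' + 1 := by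
      rw [hI0, SeqAux.card_rem P hlen_le, hTcard, hτlen]
      omega
    have hoI0 : o ∉ I'0 := (SeqAux.mem_seqAlloc_snd P hb0).2
    have hI0T : I'0 ⊆ T := SeqAux.rem_subset P τ T
    have hUT : ∀ z, z ∈ Finset.univ \ (I'0 ∪ Istar) ↔ z ∈ T ∧ z ∉ I'0 := by
      intro z
      simp only [Finset.mem_sdiff, Finset.mem_union, hTdef, Finset.mem_univ, true_and]
      tauto
    have hUpick : ∀ z ∈ Finset.univ \ (I'0 ∪ Istar), ∃ b, (b, z) ∈ seqAlloc P τ T := by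
      intro z hz
      obtain ⟨hzT, hznot⟩ := (hUT z).1 hz
      exact SeqAux.exists_mem_seqAlloc P hzT hznot
    set g : ι → Fin n := fun z =>
      if hz : ∃ b, (b, z) ∈ seqAlloc P τ T then hz.choose else b0 with hg
    have hgpick : ∀ z ∈ Finset.univ \ (I'0 ∪ Istar), (g z, z) ∈ seqAlloc P τ T := by
      intro z hz
      have hex := hUpick z hz
      simp only [hg, dif_pos hex]
      exact hex.choose_spec
    refine ⟨I'0, ?_, hI0card, g, ?_, ?_, ?_⟩
    · intro z hz
      have hzT := hI0T hz
      rw [hTdef, Finset.mem_sdiff] at hzT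
      refine Finset.mem_sdiff.2 ⟨Finset.mem_univ _, fun hc => ?_⟩
      rcases Finset.mem_insert.1 hc with hc | hc
      · exact hoI0 (hc ▸ hz)
      · exact hzT.2 hc
    · intro x hx hxa
      have := SeqAux.mem_seqAlloc_fst P (hgpick x hx)
      rw [hxa] at this
      exact hτa1 this
    · intro a ha
      have hset : (Finset.univ \ (I'0 ∪ Istar)).filter (fun z => g z = a)
          = T.filter (fun z => (a, z) ∈ seqAlloc P τ T) := by
        ext z
        simp only [Finset.mem_filter]
        constructor
        · rintro ⟨hzU, hgz⟩
          exact ⟨((hUT z).1 hzU).1, hgz ▸ hgpick z hzU⟩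
        · rintro ⟨hzT, hmem⟩
          have hznot : z ∉ I'0 := (SeqAux.mem_seqAlloc_snd P hmem).2
          have hzU : z ∈ Finset.univ \ (I'0 ∪ Istar) := (hUT z).2 ⟨hzT, hznot⟩
          exact ⟨hzU, SeqAux.seqAlloc_fst_unique P (hgpick z hzU) hmem⟩
      rw [hset, SeqAux.card_pickedBy P τ T hlen_le a, hτcount a ha]
    · intro a ha x hx hgx y hy
      exact SeqAux.lt_of_mem_rem P (hgx ▸ hgpick x hx) hy
  · -- backward direction
    rintro ⟨I', hI'sub, hI'card, g, hg1, hg2, hg3⟩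
    have hoI' : o ∉ I' := by
      intro hc
      have := hI'sub hc
      rw [Finset.mem_sdiff] at this
      exact this.2 (Finset.mem_insert_self o _)
    have hI'T : I' ⊆ T := by
      intro y hy
      have := hI'sub hy
      rw [Finset.mem_sdiff] at this
      refine Finset.mem_sdiff.2 ⟨Finset.mem_univ _, fun hc => ?_⟩
      exact this.2 (Finset.mem_insert_of_mem hc)
    have hUeq : T \ I' = Finset.univ \ (I' ∪ Istar) := by
      ext z
      simp only [hTdef, Finset.mem_sdiff, Finset.mem_union, Finset.mem_univ, true_and]
      tauto
    obtain ⟨τ, hτcount, hτrem⟩ := SeqAux.build_tau P a1 I' ((T \ I').card) T g le_rfl hI'T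
      (by intro x hx; rw [hUeq] at hx; exact hg1 x hx)
      (by
        intro x hx y hy
        rw [hUeq] at hx
        exact hg3 (g x) (hg1 x hx) x hx rfl y hy)
    have hτa1 : τ.count a1 = 0 := by
      rw [hτcount a1]
      refine Finset.card_eq_zero.2 (Finset.filter_eq_empty_iff.2 ?_)
      intro z hz
      rw [hUeq] at hz
      exact hg1 z hz
    have hτcnt : ∀ a, a ≠ a1 → τ.count a = k := by
      intro a ha
      rw [hτcount a]
      have h1 : (T \ I').filter (fun z => g z = a)
          = (Finset.univ \ (I' ∪ Istar)).filter (fun z => g z = a) := by rw [hUeq]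
      rw [h1]
      exact hg2 a ha
    refine ⟨List.replicate (k' - 1) a1 ++ (τ ++ List.replicate (k - k' + 1) a1), ?_, ?_⟩
    · intro a
      by_cases ha : a = a1
      · subst ha
        rw [List.count_append, List.count_append, List.count_replicate_self,
          List.count_replicate_self, hτa1]
        omega
      · rw [List.count_append, List.count_append, List.count_replicate,
          List.count_replicate, if_neg (by simp [Ne.symm ha]), if_neg (by simp [Ne.symm ha]),
          hτcnt a ha]
        omega
    · intro hmem
      rw [receives, Finset.mem_filter] at hmem
      have hrun := hmem.2
      rw [SeqAux.seqAlloc_append, SeqAux.seqAlloc_append, hrem_pre, hτrem] at hrun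
      rcases List.mem_append.1 hrun with h1 | h1
      · have := (SeqAux.mem_seqAlloc_snd P h1).2
        rw [hrem_pre] at this
        exact this hoT
      rcases List.mem_append.1 h1 with h2 | h2
      · have := SeqAux.mem_seqAlloc_fst P h2
        exact (List.count_eq_zero.1 hτa1) this
      · exact hoI' (SeqAux.mem_seqAlloc_snd P h2).1
end
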